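/- arXiv:2404.11191 — 3 statements merged into one kernel-verified Lean document; each statement's English description precedes it below -/
import Mathlib

section
/- If K is a Volterra kernel on J = [0,τ] with K ∈ L^∞(J², ℝ^{d×d}), then K has a resolvent R on J which is a Volterra kernel of type L¹ and of type L^∞ on J, i.e., R is measurable, R(t,σ) = 0 for σ > t, R satisfies the resolvent equations, and both esssup_{σ∈J} ∫_J |R(t,σ)| dt < +∞ and esssup_{t∈J} ∫_J |R(t,σ)| dσ < +∞. -/
open MeasureTheory Set Filter

noncomputable section

/-- `ℝ^d` with the Euclidean norm. -/
abbrev Evec (d : ℕ) := EuclideanSpace ℝ (Fin d)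

/-- `ℝ^{d×d}`, identified with linear operators on `ℝ^d`, with a fixed norm. -/
abbrev Mtx (d : ℕ) := Evec d →L[ℝ] Evec d

set_option maxHeartbeats 2000000 in
set_option synthInstance.maxHeartbeats 400000 in
/-- If `K` is a Volterra kernel on `J = [0,τ]` with `K ∈ L^∞(J², ℝ^{d×d})`,
then `K` has a resolvent `R` on `J` which is a Volterra kernel of type `L¹` and of type `L^∞`
on `J`, i.e., `R` is measurable, `R(t,σ) = 0` for `σ > t`, `R` satisfies the resolvent
equations, and both `esssup_{σ∈J} ∫_J |R(t,σ)| dt < +∞` and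
`esssup_{t∈J} ∫_J |R(t,σ)| dσ < +∞`. -/
theorem resolvent_exists
    (d : ℕ) (hd : 0 < d) (τ : ℝ) (hτ : 0 < τ)
    (K : ℝ → ℝ → Mtx d)
    (hKmeas : StronglyMeasurable (Function.uncurry K))
    (hKvolterra : ∀ t σ : ℝ, t < σ → K t σ = 0)
    (hKbdd : MemLp (Function.uncurry K) ⊤
      (volume.restrict (Set.Icc (0:ℝ) τ ×ˢ Set.Icc (0:ℝ) τ))) :
    ∃ R : ℝ → ℝ → Mtx d,
      StronglyMeasurable (Function.uncurry R) ∧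
      (∀ t σ : ℝ, t < σ → R t σ = 0) ∧
      (∀ᵐ q ∂(volume.restrict (Set.Icc (0:ℝ) τ ×ˢ Set.Icc (0:ℝ) τ)),
        K q.1 q.2 = R q.1 q.2 + ∫ ρ in Set.Icc (0:ℝ) τ, (K q.1 ρ).comp (R ρ q.2) ∧
        K q.1 q.2 = R q.1 q.2 + ∫ ρ in Set.Icc (0:ℝ) τ, (R q.1 ρ).comp (K ρ q.2)) ∧
      (∃ c : ℝ, ∀ᵐ σ ∂(volume.restrict (Set.Icc (0:ℝ) τ)),
        (∫ t in Set.Icc (0:ℝ) τ, ‖R t σ‖) ≤ c) ∧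
      (∃ c : ℝ, ∀ᵐ t ∂(volume.restrict (Set.Icc (0:ℝ) τ)),
        (∫ σ in Set.Icc (0:ℝ) τ, ‖R t σ‖) ≤ c) := by
  classical
  haveI : Nonempty (Fin d) := ⟨⟨0, hd⟩⟩
  haveI : Nontrivial (Mtx d) := by
    refine ⟨1, 0, fun h => ?_⟩
    obtain ⟨x, hx⟩ := exists_ne (0 : Evec d)
    have hx' := congrFun (congrArg DFunLike.coe h) x
    simp only [ContinuousLinearMap.one_apply, ContinuousLinearMap.zero_apply] at hx'
    exact hx hx'
  haveI : IsScalarTower ℝ (Mtx d) (Mtx d) := ⟨fun cc f g => by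
    ext x
    simp⟩
  haveI : SMulCommClass ℝ (Mtx d) (Mtx d) := ⟨fun cc f g => by
    ext x
    simp⟩
  set ν : Measure ℝ := volume.restrict (Set.Icc (0:ℝ) τ) with hν
  haveI hfin : IsFiniteMeasure ν := by
    refine ⟨?_⟩
    rw [hν, Measure.restrict_apply_univ]
    exact measure_Icc_lt_top
  -- the essential bound M for K on the square
  obtain ⟨M, hM0, hMae⟩ : ∃ M : ℝ, 0 ≤ M ∧
      ∀ᵐ q ∂(volume.restrict (Set.Icc (0:ℝ) τ ×ˢ Set.Icc (0:ℝ) τ)),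
        ‖Function.uncurry K q‖ ≤ M := by
    refine ⟨(eLpNormEssSup (Function.uncurry K)
      (volume.restrict (Set.Icc (0:ℝ) τ ×ˢ Set.Icc (0:ℝ) τ))).toReal,
      ENNReal.toReal_nonneg, ?_⟩
    have hne : eLpNormEssSup (Function.uncurry K)
        (volume.restrict (Set.Icc (0:ℝ) τ ×ˢ Set.Icc (0:ℝ) τ)) ≠ ⊤ := by
      have := hKbdd.2
      rwa [eLpNorm_exponent_top, lt_top_iff_ne_top] at this
    filter_upwards [ae_le_eLpNormEssSup (f := Function.uncurry K)
      (μ := volume.restrict (Set.Icc (0:ℝ) τ ×ˢ Set.Icc (0:ℝ) τ))] with q hq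
    have h := ENNReal.toReal_mono hne hq
    simpa using h
  -- truncated kernel K' : everywhere bounded by M, equal to K a.e. on the square
  obtain ⟨K', hK'meas, hK'v, hK'bd, hKK'⟩ :
      ∃ K' : ℝ → ℝ → Mtx d, StronglyMeasurable (Function.uncurry K') ∧
        (∀ t σ : ℝ, t < σ → K' t σ = 0) ∧ (∀ t σ : ℝ, ‖K' t σ‖ ≤ M) ∧
        ∀ᵐ q ∂(volume.restrict (Set.Icc (0:ℝ) τ ×ˢ Set.Icc (0:ℝ) τ)),
          Function.uncurry K q = Function.uncurry K' q := by
    refine ⟨fun t σ => if ‖K t σ‖ ≤ M then K t σ else 0, ?_, ?_, ?_, ?_⟩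
    · have hs : MeasurableSet {q : ℝ × ℝ | ‖Function.uncurry K q‖ ≤ M} :=
        measurableSet_le hKmeas.norm.measurable measurable_const
      have heq : Function.uncurry (fun t σ => if ‖K t σ‖ ≤ M then K t σ else 0)
          = Set.indicator {q : ℝ × ℝ | ‖Function.uncurry K q‖ ≤ M} (Function.uncurry K) := by
        funext q
        obtain ⟨x, y⟩ := q
        by_cases h : ‖K x y‖ ≤ M <;>
          simp [Function.uncurry, h, Set.indicator]
      rw [heq]
      exact hKmeas.indicator hs
    · intro t σ h
      simp [hKvolterra t σ h]
    · intro t σ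
      by_cases h : ‖K t σ‖ ≤ M <;> simp [h, hM0]
    · filter_upwards [hMae] with q hq
      simp only [Function.uncurry] at hq ⊢
      rw [if_pos hq]
  have hnsm : ∀ (k : ℕ) (x : Mtx d), ‖(-1:ℝ)^k • x‖ = ‖x‖ :=
    fun k x => (norm_smul ((-1:ℝ)^k) x).trans (by simp)
  -- slice measurability helpers
  have hsliceL : ∀ (F : ℝ → ℝ → Mtx d), StronglyMeasurable (Function.uncurry F) →
      ∀ t, StronglyMeasurable (fun ρ => F t ρ) := fun F hF t =>
    hF.comp_measurable (measurable_const.prodMk measurable_id)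
  have hsliceR : ∀ (F : ℝ → ℝ → Mtx d), StronglyMeasurable (Function.uncurry F) →
      ∀ σ, StronglyMeasurable (fun ρ => F ρ σ) := fun F hF σ =>
    hF.comp_measurable (measurable_id.prodMk measurable_const)
  -- bounded strongly measurable functions are integrable on the finite measure ν
  have hintg : ∀ (f : ℝ → Mtx d) (C₀ : ℝ), StronglyMeasurable f →
      (∀ ρ, ‖f ρ‖ ≤ C₀) → Integrable f ν := fun f C₀ hm hb =>
    (integrable_const C₀).mono' hm.aestronglyMeasurable (ae_of_all _ hb)
  -- the iterated kernels
  obtain ⟨B, hB0, hBsucc⟩ : ∃ B : ℕ → ℝ → ℝ → Mtx d, B 0 = K' ∧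
      ∀ n t σ, B (n+1) t σ = ∫ ρ, K' t ρ * B n ρ σ ∂ν :=
    ⟨fun n => Nat.rec K' (fun _ Bn t σ => ∫ ρ, K' t ρ * Bn ρ σ ∂ν) n,
      rfl, fun n t σ => rfl⟩
  have hBmeas : ∀ n, StronglyMeasurable (Function.uncurry (B n)) := by
    intro n
    induction n with
    | zero => rw [hB0]; exact hK'meas
    | succ n ih =>
      have hF : StronglyMeasurable
          (fun q : (ℝ × ℝ) × ℝ => K' q.1.1 q.2 * B n q.2 q.1.2) :=
        (hK'meas.comp_measurable ((measurable_fst.fst).prodMk measurable_snd)).mul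
          (ih.comp_measurable (measurable_snd.prodMk (measurable_fst.snd)))
      have h := hF.integral_prod_right' (ν := ν)
      have : Function.uncurry (B (n+1))
          = fun x : ℝ × ℝ => ∫ y, K' x.1 y * B n y x.2 ∂ν := by
        funext p
        exact hBsucc n p.1 p.2
      rw [this]
      exact h
  -- Volterra property for iterated kernels
  have hBv : ∀ n t σ, t < σ → B n t σ = 0 := by
    intro n
    induction n with
    | zero => rw [hB0]; exact hK'v
    | succ n ih =>
      intro t σ h
      have hz : ∀ ρ, K' t ρ * B n ρ σ = 0 := by
        intro ρ
        rcases le_or_gt ρ t with hρ | hρ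
        · rw [ih ρ σ (lt_of_le_of_lt hρ h), mul_zero]
        · rw [hK'v t ρ hρ, zero_mul]
      rw [hBsucc]
      simp only [hz, integral_zero]
  -- key quantitative bound for the iterated kernels
  have hBkey : ∀ n t σ, ‖B n t σ‖ ≤
      M ^ (n+1) * (max (min t τ - max σ 0) 0) ^ n / (n.factorial : ℝ) := by
    intro n
    induction n with
    | zero =>
      intro t σ
      simpa [hB0] using hK'bd t σ
    | succ n ih =>
      intro t σ
      have ha0 : (0:ℝ) ≤ max σ 0 := le_max_right _ _
      have hbτ : min t τ ≤ τ := min_le_right _ _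
      have hRHS0 : 0 ≤ M ^ (n+1+1) * (max (min t τ - max σ 0) 0) ^ (n+1)
          / ((n+1).factorial : ℝ) := by positivity
      rcases lt_or_ge t σ with hts | hts
      · rw [hBv _ _ _ hts]
        simpa using hRHS0
      rcases lt_or_ge (min t τ) (max σ 0) with hba | hab
      · -- degenerate case: the iterated kernel vanishes
        have hz : ∀ ρ ∈ Set.Icc (0:ℝ) τ, K' t ρ * B n ρ σ = 0 := by
          intro ρ hρ
          rcases lt_or_ge ρ σ with h1 | h1
          · rw [hBv n ρ σ h1, mul_zero]
          · have ht0 : t < 0 := by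
              by_contra hcon
              push_neg at hcon
              have hστ : σ ≤ τ := le_trans h1 hρ.2
              have : max σ 0 ≤ min t τ :=
                max_le (le_min hts hστ) (le_min hcon hτ.le)
              exact absurd this (not_le.2 hba)
            rw [hK'v t ρ (lt_of_lt_of_le ht0 hρ.1), zero_mul]
        rw [hBsucc]
        rw [show (∫ ρ, K' t ρ * B n ρ σ ∂ν)
            = ∫ ρ in Set.Icc (0:ℝ) τ, K' t ρ * B n ρ σ from by rw [hν]]
        rw [setIntegral_eq_zero_of_forall_eq_zero hz]
        simpa using hRHS0
      · -- main case
        set a := max σ 0 with haa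
        set b := min t τ with hbb
        have hsub : Set.Icc a b ⊆ Set.Icc (0:ℝ) τ := Set.Icc_subset_Icc ha0 hbτ
        have hstep1 : B (n+1) t σ = ∫ ρ in Set.Icc a b, K' t ρ * B n ρ σ := by
          rw [hBsucc]
          rw [show (∫ ρ, K' t ρ * B n ρ σ ∂ν)
              = ∫ ρ in Set.Icc (0:ℝ) τ, K' t ρ * B n ρ σ from by rw [hν]]
          rw [setIntegral_congr_fun measurableSet_Icc
            (g := (Set.Icc a b).indicator (fun ρ => K' t ρ * B n ρ σ)) ?_]
          · rw [setIntegral_indicator measurableSet_Icc,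
              Set.inter_eq_self_of_subset_right hsub]
          · intro ρ hρ
            by_cases hmem : ρ ∈ Set.Icc a b
            · rw [Set.indicator_of_mem hmem]
            · rw [Set.indicator_of_notMem hmem]
              show K' t ρ * B n ρ σ = 0
              rw [Set.mem_Icc, not_and_or, not_le, not_le] at hmem
              rcases hmem with h1 | h1
              · have : ρ < σ := by
                  rcases lt_max_iff.mp h1 with h | h
                  · exact h
                  · exact absurd hρ.1 (not_le.2 h)
                rw [hBv n ρ σ this, mul_zero]
              · have : t < ρ := by
                  rcases min_lt_iff.mp h1 with h | h
                  · exact h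
                  · exact absurd hρ.2 (not_le.2 h)
                rw [hK'v t ρ this, zero_mul]
        have hg_int : IntegrableOn
            (fun ρ => M * (M ^ (n+1) * (ρ - a) ^ n / (n.factorial : ℝ)))
            (Set.Icc a b) volume := by
          apply Continuous.integrableOn_Icc
          fun_prop
        have hnorm : ‖B (n+1) t σ‖ ≤
            ∫ ρ in Set.Icc a b, M * (M ^ (n+1) * (ρ - a) ^ n / (n.factorial : ℝ)) := by
          rw [hstep1]
          refine norm_integral_le_of_norm_le hg_int ?_
          filter_upwards [ae_restrict_mem measurableSet_Icc] with ρ hρ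
          have h1 : ‖K' t ρ * B n ρ σ‖ ≤ ‖K' t ρ‖ * ‖B n ρ σ‖ := norm_mul_le _ _
          refine h1.trans ?_
          have h2 := ih ρ σ
          have hmin : min ρ τ = ρ := min_eq_left (hρ.2.trans hbτ)
          have hmax : max (ρ - a) 0 = ρ - a := max_eq_left (sub_nonneg.2 hρ.1)
          rw [hmin, ← haa, hmax] at h2
          exact mul_le_mul (hK'bd t ρ) h2 (norm_nonneg _) hM0
        refine hnorm.trans ?_
        have hpint : (∫ ρ in Set.Icc a b, (ρ - a) ^ n) = (b - a) ^ (n+1) / ((n:ℝ)+1) := by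
          rw [MeasureTheory.integral_Icc_eq_integral_Ioc,
            ← intervalIntegral.integral_of_le hab,
            intervalIntegral.integral_comp_sub_right (fun x => x ^ n) a, sub_self,
            integral_pow]
          simp
        have hconst : (∫ ρ in Set.Icc a b, M * (M ^ (n+1) * (ρ - a) ^ n / (n.factorial : ℝ)))
            = (M * (M ^ (n+1) / (n.factorial : ℝ))) * ((b - a) ^ (n+1) / ((n:ℝ)+1)) := by
          rw [show (fun ρ => M * (M ^ (n+1) * (ρ - a) ^ n / (n.factorial : ℝ)))
              = fun ρ => (M * (M ^ (n+1) / (n.factorial : ℝ))) * (ρ - a) ^ n from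
            funext fun ρ => by ring]
          rw [integral_const_mul, hpint]
        rw [hconst]
        rw [max_eq_left (sub_nonneg.2 hab)]
        rw [Nat.factorial_succ]
        have h1 : ((n.factorial : ℝ)) ≠ 0 := Nat.cast_ne_zero.2 (Nat.factorial_ne_zero n)
        have h2 : ((n:ℝ) + 1) ≠ 0 := by positivity
        refine le_of_eq ?_
        push_cast
        field_simp
        ring
  -- the summable majorant
  obtain ⟨c, hcdef⟩ : ∃ c : ℕ → ℝ, ∀ n, c n = M ^ (n+1) * τ ^ n / (n.factorial : ℝ) :=
    ⟨_, fun n => rfl⟩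
  have hc0 : ∀ n, 0 ≤ c n := by
    intro n
    rw [hcdef n]
    positivity
  have hcsum : Summable c := by
    refine ((Real.summable_pow_div_factorial (M*τ)).mul_left M).congr ?_
    intro n
    rw [hcdef n]
    simp only [mul_pow]
    ring
  have hBc : ∀ n t σ, ‖B n t σ‖ ≤ c n := by
    intro n t σ
    refine (hBkey n t σ).trans ?_
    rw [hcdef n]
    have hx : max (min t τ - max σ 0) 0 ≤ τ := by
      refine max_le ?_ hτ.le
      have := sub_le_sub (min_le_right t τ) (le_max_right σ 0)
      simpa using this
    gcongr
  -- sign helpers in the ring Mtx d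
  have hneg1mul : ∀ x : Mtx d, (-1 : Mtx d) * x = -x := fun x => by
    ext y; simp [ContinuousLinearMap.mul_apply]
  have hmulneg1 : ∀ x : Mtx d, x * (-1 : Mtx d) = -x := fun x => by
    ext y; simp [ContinuousLinearMap.mul_apply]
  have hmulneg : ∀ a b : Mtx d, a * (-b) = -(a * b) := fun a b => by
    ext y; simp [ContinuousLinearMap.mul_apply]
  have hnegmul : ∀ a b : Mtx d, (-a) * b = -(a * b) := fun a b => by
    ext y; simp [ContinuousLinearMap.mul_apply]
  have hsign : ∀ k : ℕ, (-1 : Mtx d)^k = 1 ∨ (-1 : Mtx d)^k = -1 := by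
    intro k
    induction k with
    | zero => left; rw [pow_zero]
    | succ k ih =>
      rw [pow_succ]
      rcases ih with h | h
      · right; rw [h, one_mul]
      · left; rw [h, hneg1mul, neg_neg]
  have hnm : ∀ (k : ℕ) (x : Mtx d), ‖(-1 : Mtx d)^k * x‖ = ‖x‖ := by
    intro k x
    rcases hsign k with h | h <;> rw [h]
    · rw [one_mul]
    · rw [hneg1mul, norm_neg]
  have hmove : ∀ (k : ℕ) (a b : Mtx d), a * ((-1 : Mtx d)^k * b) = (-1 : Mtx d)^k * (a * b) := by
    intro k a b
    rcases hsign k with h | h <;> rw [h]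
    · rw [one_mul, one_mul]
    · rw [hneg1mul b, hneg1mul (a * b), hmulneg a b]
  -- the resolvent as an alternating Neumann series
  have hsummand : ∀ t σ, Summable (fun n => (-1 : Mtx d)^n * B n t σ) := by
    intro t σ
    refine Summable.of_norm ?_
    refine Summable.of_nonneg_of_le (fun n => norm_nonneg _) (fun n => ?_) hcsum
    rw [hnm]
    exact hBc n t σ
  obtain ⟨R, hRdef⟩ : ∃ R : ℝ → ℝ → Mtx d, ∀ t σ, R t σ = ∑' n, (-1 : Mtx d)^n * B n t σ :=
    ⟨_, fun t σ => rfl⟩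
  obtain ⟨C, hCdef⟩ : ∃ C : ℝ, C = ∑' n, c n := ⟨_, rfl⟩
  have hnorms : ∀ t σ, Summable (fun n => ‖(-1 : Mtx d)^n * B n t σ‖) := by
    intro t σ
    refine Summable.of_nonneg_of_le (fun n => norm_nonneg _) (fun n => ?_) hcsum
    rw [hnm]
    exact hBc n t σ
  have hRbd : ∀ t σ, ‖R t σ‖ ≤ C := by
    intro t σ
    rw [hRdef t σ, hCdef]
    refine (norm_tsum_le_tsum_norm (hnorms t σ)).trans ?_
    refine Summable.tsum_le_tsum (fun n => ?_) (hnorms t σ) hcsum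
    rw [hnm]
    exact hBc n t σ
  have hRmeas : StronglyMeasurable (Function.uncurry R) := by
    refine stronglyMeasurable_of_tendsto atTop
      (f := fun N => fun p : ℝ × ℝ => ∑ n ∈ Finset.range N, (-1 : Mtx d)^n * B n p.1 p.2) ?_ ?_
    · intro N
      refine Finset.stronglyMeasurable_fun_sum _ (fun n _ => ?_)
      show StronglyMeasurable fun p : ℝ × ℝ => (-1 : Mtx d)^n * B n p.1 p.2
      exact stronglyMeasurable_const.mul (hBmeas n)
    · rw [tendsto_pi_nhds]
      intro p
      have heq : Function.uncurry R p = ∑' n, (-1 : Mtx d)^n * B n p.1 p.2 := hRdef p.1 p.2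
      rw [heq]
      exact (hsummand p.1 p.2).hasSum.tendsto_sum_nat
  have hRv : ∀ t σ : ℝ, t < σ → R t σ = 0 := by
    intro t σ h
    rw [hRdef t σ]
    have hz : ∀ n : ℕ, (-1 : Mtx d)^n * B n t σ = 0 := fun n => by
      rw [hBv n t σ h, mul_zero]
    exact (tsum_congr hz).trans tsum_zero
  -- swapping ∫ and ∑'
  have hswap : ∀ (f : ℕ → ℝ → Mtx d) (C' : ℝ), 0 ≤ C' →
      (∀ n, StronglyMeasurable (f n)) →
      (∀ n ρ, ‖f n ρ‖ ≤ C' * c n) →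
      (∫ ρ, (∑' n, f n ρ) ∂ν) = ∑' n, ∫ ρ, f n ρ ∂ν := by
    intro f C' hC' hm hb
    refine integral_tsum (fun n => (hm n).aestronglyMeasurable) ?_
    have hbound : ∀ n, (∫⁻ ρ, ‖f n ρ‖₊ ∂ν) ≤ ENNReal.ofReal (C' * c n * τ) := by
      intro n
      calc (∫⁻ ρ, ‖f n ρ‖₊ ∂ν) ≤ ∫⁻ _, ENNReal.ofReal (C' * c n) ∂ν := by
            refine lintegral_mono fun ρ => ?_
            rw [← enorm_eq_nnnorm, ← ofReal_norm]
            exact ENNReal.ofReal_le_ofReal (hb n ρ)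
        _ = ENNReal.ofReal (C' * c n) * ν Set.univ := lintegral_const _
        _ ≤ ENNReal.ofReal (C' * c n) * ENNReal.ofReal τ := by
            gcongr
            rw [hν, Measure.restrict_apply_univ, Real.volume_Icc]
            exact ENNReal.ofReal_le_ofReal (by linarith)
        _ = ENNReal.ofReal (C' * c n * τ) := by
            rw [← ENNReal.ofReal_mul (mul_nonneg hC' (hc0 n))]
    refine ne_top_of_le_ne_top ?_ (ENNReal.tsum_le_tsum hbound)
    have hs : Summable (fun n => C' * c n * τ) := ((hcsum.mul_left C').mul_right τ)
    rw [← ENNReal.ofReal_tsum_of_nonneg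
      (fun n => mul_nonneg (mul_nonneg hC' (hc0 n)) hτ.le) hs]
    exact ENNReal.ofReal_ne_top
  -- first convolution identity
  have hconv1 : ∀ t σ, (∫ ρ, K' t ρ * R ρ σ ∂ν) = ∑' n, (-1 : Mtx d)^n * B (n+1) t σ := by
    intro t σ
    have h1 : ∀ ρ, K' t ρ * R ρ σ = ∑' n, (-1 : Mtx d)^n * (K' t ρ * B n ρ σ) := by
      intro ρ
      have hmap := (((hsummand ρ σ).hasSum.mapL
        (ContinuousLinearMap.mul ℝ (Mtx d) (K' t ρ)))).tsum_eq
      simp only [ContinuousLinearMap.mul_apply'] at hmap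
      rw [hRdef ρ σ, ← hmap]
      exact tsum_congr fun n => hmove n (K' t ρ) (B n ρ σ)
    rw [integral_congr_ae (ae_of_all _ h1)]
    rw [hswap (fun n ρ => (-1 : Mtx d)^n * (K' t ρ * B n ρ σ)) M hM0 ?_ ?_]
    · refine tsum_congr fun n => ?_
      have hInt : Integrable (fun ρ => K' t ρ * B n ρ σ) ν := by
        refine hintg _ (M * c n) ((hsliceL K' hK'meas t).mul
          (hsliceR (B n) (hBmeas n) σ)) fun ρ => ?_
        exact (norm_mul_le _ _).trans
          (mul_le_mul (hK'bd t ρ) (hBc n ρ σ) (norm_nonneg _) hM0)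
      have hLI := ((ContinuousLinearMap.mul ℝ (Mtx d)
        ((-1 : Mtx d)^n)).integral_comp_comm hInt)
      simp only [ContinuousLinearMap.mul_apply'] at hLI
      rw [hLI, ← hBsucc]
    · intro n
      show StronglyMeasurable fun ρ => (-1 : Mtx d)^n * (K' t ρ * B n ρ σ)
      exact stronglyMeasurable_const.mul
        ((hsliceL K' hK'meas t).mul (hsliceR (B n) (hBmeas n) σ))
    · intro n ρ
      rw [hnm]
      exact (norm_mul_le _ _).trans
        (mul_le_mul (hK'bd t ρ) (hBc n ρ σ) (norm_nonneg _) hM0)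
  -- iterated kernels also satisfy the reversed convolution identity (Fubini)
  have hconvB : ∀ n t σ, (∫ ρ, B n t ρ * K' ρ σ ∂ν) = B (n+1) t σ := by
    intro n
    induction n with
    | zero =>
      intro t σ
      rw [hBsucc, hB0]
    | succ n ih =>
      intro t σ
      have h1 : ∀ u, B (n+1) t u * K' u σ
          = ∫ ρ, (K' t ρ * B n ρ u) * K' u σ ∂ν := by
        intro u
        rw [hBsucc]
        have hInt : Integrable (fun ρ => K' t ρ * B n ρ u) ν := by
          refine hintg _ (M * c n) ((hsliceL K' hK'meas t).mul
            (hsliceR (B n) (hBmeas n) u)) fun ρ => ?_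
          exact (norm_mul_le _ _).trans
            (mul_le_mul (hK'bd t ρ) (hBc n ρ u) (norm_nonneg _) hM0)
        have := (((ContinuousLinearMap.mul ℝ (Mtx d)).flip (K' u σ)).integral_comp_comm hInt)
        simp only [ContinuousLinearMap.flip_apply, ContinuousLinearMap.mul_apply'] at this
        exact this.symm
      rw [integral_congr_ae (ae_of_all _ h1)]
      have hFub : Integrable (Function.uncurry
          (fun u ρ => (K' t ρ * B n ρ u) * K' u σ)) (ν.prod ν) := by
        refine (integrable_const ((M * c n) * M)).mono' ?_ (ae_of_all _ ?_)
        · refine StronglyMeasurable.aestronglyMeasurable ?_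
          refine StronglyMeasurable.mul ?_ ?_
          · refine StronglyMeasurable.mul ?_ ?_
            · exact hK'meas.comp_measurable
                (measurable_const.prodMk measurable_snd)
            · exact (hBmeas n).comp_measurable
                (measurable_snd.prodMk measurable_fst)
          · exact hK'meas.comp_measurable
              (measurable_fst.prodMk measurable_const)
        · intro p
          refine (norm_mul_le _ _).trans ?_
          refine mul_le_mul ?_ (hK'bd _ _) (norm_nonneg _) (mul_nonneg hM0 (hc0 n))
          exact (norm_mul_le _ _).trans
            (mul_le_mul (hK'bd _ _) (hBc n _ _) (norm_nonneg _) hM0)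
      rw [integral_integral_swap hFub]
      have h2 : ∀ ρ, (∫ u, (K' t ρ * B n ρ u) * K' u σ ∂ν) = K' t ρ * B (n+1) ρ σ := by
        intro ρ
        have h3 : ∀ u, (K' t ρ * B n ρ u) * K' u σ = K' t ρ * (B n ρ u * K' u σ) :=
          fun u => mul_assoc _ _ _
        rw [integral_congr_ae (ae_of_all _ h3)]
        have hInt : Integrable (fun u => B n ρ u * K' u σ) ν := by
          refine hintg _ (c n * M) ((hsliceL (B n) (hBmeas n) ρ).mul
            (hsliceR K' hK'meas σ)) fun u => ?_
          exact (norm_mul_le _ _).trans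
            (mul_le_mul (hBc n ρ u) (hK'bd u σ) (norm_nonneg _) (hc0 n))
        have := ((ContinuousLinearMap.mul ℝ (Mtx d) (K' t ρ)).integral_comp_comm hInt)
        simp only [ContinuousLinearMap.mul_apply'] at this
        rw [this, ih ρ σ]
      rw [integral_congr_ae (ae_of_all _ h2), ← hBsucc]
  -- second convolution identity
  have hconv2 : ∀ t σ, (∫ ρ, R t ρ * K' ρ σ ∂ν) = ∑' n, (-1 : Mtx d)^n * B (n+1) t σ := by
    intro t σ
    have h1 : ∀ ρ, R t ρ * K' ρ σ = ∑' n, (-1 : Mtx d)^n * (B n t ρ * K' ρ σ) := by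
      intro ρ
      have hmap := (((hsummand t ρ).hasSum.mapL
        ((ContinuousLinearMap.mul ℝ (Mtx d)).flip (K' ρ σ)))).tsum_eq
      simp only [ContinuousLinearMap.flip_apply, ContinuousLinearMap.mul_apply'] at hmap
      rw [hRdef t ρ, ← hmap]
      exact tsum_congr fun n => mul_assoc _ _ _
    rw [integral_congr_ae (ae_of_all _ h1)]
    rw [hswap (fun n ρ => (-1 : Mtx d)^n * (B n t ρ * K' ρ σ)) M hM0 ?_ ?_]
    · refine tsum_congr fun n => ?_
      have hInt : Integrable (fun ρ => B n t ρ * K' ρ σ) ν := by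
        refine hintg _ (c n * M) ((hsliceL (B n) (hBmeas n) t).mul
          (hsliceR K' hK'meas σ)) fun ρ => ?_
        exact (norm_mul_le _ _).trans
          (mul_le_mul (hBc n t ρ) (hK'bd ρ σ) (norm_nonneg _) (hc0 n))
      have hLI := ((ContinuousLinearMap.mul ℝ (Mtx d)
        ((-1 : Mtx d)^n)).integral_comp_comm hInt)
      simp only [ContinuousLinearMap.mul_apply'] at hLI
      rw [hLI, hconvB]
    · intro n
      show StronglyMeasurable fun ρ => (-1 : Mtx d)^n * (B n t ρ * K' ρ σ)
      exact stronglyMeasurable_const.mul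
        ((hsliceL (B n) (hBmeas n) t).mul (hsliceR K' hK'meas σ))
    · intro n ρ
      rw [hnm]
      refine (norm_mul_le _ _).trans ?_
      calc ‖B n t ρ‖ * ‖K' ρ σ‖ ≤ c n * M :=
            mul_le_mul (hBc n t ρ) (hK'bd ρ σ) (norm_nonneg _) (hc0 n)
        _ = M * c n := mul_comm _ _
  -- the key algebraic identity: K' = R + (alternating tail)
  have hkey : ∀ t σ, K' t σ = R t σ + ∑' n, (-1 : Mtx d)^n * B (n+1) t σ := by
    intro t σ
    have hs1 : Summable (fun n => (-1 : Mtx d)^(n+1) * B (n+1) t σ) := by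
      refine Summable.of_norm ?_
      refine Summable.of_nonneg_of_le (fun n => norm_nonneg _) (fun n => ?_)
        ((summable_nat_add_iff 1).2 hcsum)
      rw [hnm]
      exact hBc (n+1) t σ
    have hs2 : Summable (fun n => (-1 : Mtx d)^n * B (n+1) t σ) := by
      refine Summable.of_norm ?_
      refine Summable.of_nonneg_of_le (fun n => norm_nonneg _) (fun n => ?_)
        ((summable_nat_add_iff 1).2 hcsum)
      rw [hnm]
      exact hBc (n+1) t σ
    have h0 : R t σ = B 0 t σ + ∑' n, (-1 : Mtx d)^(n+1) * B (n+1) t σ := by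
      rw [hRdef t σ]
      rw [Summable.tsum_eq_zero_add (hsummand t σ)]
      simp
    rw [h0, add_assoc, ← Summable.tsum_add hs1 hs2]
    have hz : ∀ n : ℕ, (-1 : Mtx d)^(n+1) * B (n+1) t σ + (-1 : Mtx d)^n * B (n+1) t σ = 0 := by
      intro n
      rw [pow_succ, hmulneg1, hnegmul, neg_add_cancel]
    rw [show (fun n => (-1 : Mtx d)^(n+1) * B (n+1) t σ + (-1 : Mtx d)^n * B (n+1) t σ)
        = fun _ => (0 : Mtx d) from funext hz]
    rw [tsum_zero, add_zero, hB0]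
  -- measure-theoretic bookkeeping for the product measure
  have hπ : volume.restrict (Set.Icc (0:ℝ) τ ×ˢ Set.Icc (0:ℝ) τ) = ν.prod ν := by
    rw [hν, Measure.prod_restrict, ← Measure.volume_eq_prod]
  have haeKK' : ∀ᵐ q ∂(ν.prod ν), Function.uncurry K q = Function.uncurry K' q := by
    rw [← hπ]
    exact hKK'
  have hDmeas : MeasurableSet {q : ℝ × ℝ | Function.uncurry K q = Function.uncurry K' q} :=
    hKmeas.measurableSet_eq_fun hK'meas
  have haeswap : ∀ᵐ q ∂(ν.prod ν),
      Function.uncurry K q.swap = Function.uncurry K' q.swap := by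
    have h1 : ∀ᵐ q ∂(Measure.map Prod.swap (ν.prod ν)),
        Function.uncurry K q = Function.uncurry K' q := by
      rw [Measure.prod_swap]
      exact haeKK'
    rwa [ae_map_iff measurable_swap.aemeasurable hDmeas] at h1
  have h1ae : ∀ᵐ t ∂ν, ∀ᵐ ρ ∂ν, K t ρ = K' t ρ := by
    have := Measure.ae_ae_of_ae_prod haeKK'
    simpa [Function.uncurry] using this
  have h2ae : ∀ᵐ σ ∂ν, ∀ᵐ ρ ∂ν, K ρ σ = K' ρ σ := by
    have := Measure.ae_ae_of_ae_prod haeswap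
    simpa [Function.uncurry, Prod.swap] using this
  have hlift1 : ∀ (p : ℝ → Prop), (∀ᵐ x ∂ν, p x) → (∀ᵐ q ∂(ν.prod ν), p q.1) := by
    intro p hp
    rw [ae_iff] at hp ⊢
    have hsub : {q : ℝ × ℝ | ¬ p q.1}
        ⊆ (toMeasurable ν {x | ¬ p x}) ×ˢ (Set.univ : Set ℝ) := by
      intro q hq
      exact ⟨subset_toMeasurable _ _ hq, trivial⟩
    refine measure_mono_null hsub ?_
    rw [Measure.prod_prod, measure_toMeasurable, hp, zero_mul]
  have hlift2 : ∀ (p : ℝ → Prop), (∀ᵐ x ∂ν, p x) → (∀ᵐ q ∂(ν.prod ν), p q.2) := by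
    intro p hp
    rw [ae_iff] at hp ⊢
    have hsub : {q : ℝ × ℝ | ¬ p q.2}
        ⊆ (Set.univ : Set ℝ) ×ˢ (toMeasurable ν {x | ¬ p x}) := by
      intro q hq
      exact ⟨trivial, subset_toMeasurable _ _ hq⟩
    refine measure_mono_null hsub ?_
    rw [Measure.prod_prod, measure_toMeasurable, hp, mul_zero]
  -- assemble everything
  refine ⟨R, hRmeas, hRv, ?_, ⟨τ * C, ?_⟩, ⟨τ * C, ?_⟩⟩
  · rw [hπ]
    filter_upwards [haeKK', hlift1 _ h1ae, hlift2 _ h2ae] with q hq hq1 hq2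
    have hqK : K q.1 q.2 = K' q.1 q.2 := hq
    constructor
    · rw [hqK]
      have hI : (∫ ρ in Set.Icc (0:ℝ) τ, (K q.1 ρ).comp (R ρ q.2))
          = ∫ ρ, K' q.1 ρ * R ρ q.2 ∂ν := by
        rw [show (∫ ρ in Set.Icc (0:ℝ) τ, (K q.1 ρ).comp (R ρ q.2))
            = ∫ ρ, (K q.1 ρ).comp (R ρ q.2) ∂ν from by rw [hν]]
        refine integral_congr_ae ?_
        filter_upwards [hq1] with ρ hρ
        rw [← ContinuousLinearMap.mul_def, hρ]
      rw [hI, hconv1 q.1 q.2]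
      exact hkey q.1 q.2
    · rw [hqK]
      have hI : (∫ ρ in Set.Icc (0:ℝ) τ, (R q.1 ρ).comp (K ρ q.2))
          = ∫ ρ, R q.1 ρ * K' ρ q.2 ∂ν := by
        rw [show (∫ ρ in Set.Icc (0:ℝ) τ, (R q.1 ρ).comp (K ρ q.2))
            = ∫ ρ, (R q.1 ρ).comp (K ρ q.2) ∂ν from by rw [hν]]
        refine integral_congr_ae ?_
        filter_upwards [hq2] with ρ hρ
        rw [← ContinuousLinearMap.mul_def, hρ]
      rw [hI, hconv2 q.1 q.2]
      exact hkey q.1 q.2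
  · refine ae_of_all _ fun σ => ?_
    have hIntR : Integrable (fun t => R t σ) ν :=
      hintg _ C (hsliceR R hRmeas σ) (fun t => hRbd t σ)
    have hmono : (∫ t, ‖R t σ‖ ∂ν) ≤ ∫ _, C ∂ν :=
      integral_mono hIntR.norm (integrable_const C) (fun t => hRbd t σ)
    rw [show (∫ t in Set.Icc (0:ℝ) τ, ‖R t σ‖) = ∫ t, ‖R t σ‖ ∂ν from by rw [hν]]
    refine hmono.trans ?_
    rw [integral_const, smul_eq_mul, hν, measureReal_def, Measure.restrict_apply_univ, Real.volume_Icc]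
    rw [ENNReal.toReal_ofReal (by linarith)]
    simp
  · refine ae_of_all _ fun t => ?_
    have hIntR : Integrable (fun σ => R t σ) ν :=
      hintg _ C (hsliceL R hRmeas t) (fun σ => hRbd t σ)
    have hmono : (∫ σ, ‖R t σ‖ ∂ν) ≤ ∫ _, C ∂ν :=
      integral_mono hIntR.norm (integrable_const C) (fun σ => hRbd t σ)
    rw [show (∫ σ in Set.Icc (0:ℝ) τ, ‖R t σ‖) = ∫ σ, ‖R t σ‖ ∂ν from by rw [hν]]
    refine hmono.trans ?_
    rw [integral_const, smul_eq_mul, hν, measureReal_def, Measure.restrict_apply_univ, Real.volume_Icc]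
    rw [ENNReal.toReal_ofReal (by linarith)]
    simp
end
end

section
/- If C ∈ L^∞([s,s+τ]×[−τ,0], ℝ^{d×d}) and φ ∈ X = L²([−τ,0], ℝ^d), then the initial value problem given by the renewal equation x(t) = ∫_{−τ}^0 C(t,θ) x_t(θ) dθ for t ∈ (s, s+τ] together with x_s = φ has a unique solution x ∈ L²([s,s+τ], ℝ^d) on [s,s+τ]. -/
open MeasureTheory Set Filter

noncomputable section

namespace REproof
variable {d : ℕ}

def extf (s : ℝ) (ψ z : ℝ → Evec d) : ℝ → Evec d := fun u => if u < s then ψ (u - s) else z u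

def Tfun (τ s : ℝ) (C : ℝ → ℝ → Mtx d) (ψ z : ℝ → Evec d) : ℝ → Evec d :=
  fun t => ∫ θ in Icc (-τ) (0:ℝ), C t θ (extf s ψ z (t + θ))

theorem finIcc (a b : ℝ) : IsFiniteMeasure (volume.restrict (Icc a b)) :=
  ⟨by rw [Measure.restrict_apply_univ]; exact measure_Icc_lt_top⟩

theorem extf_sm {s : ℝ} {ψ z : ℝ → Evec d} (hψ : StronglyMeasurable ψ)
    (hz : StronglyMeasurable z) : StronglyMeasurable (extf s ψ z) := by
  refine StronglyMeasurable.ite (measurableSet_Iio (a := s)) ?_ hz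
  exact hψ.comp_measurable (measurable_id.sub measurable_const)

theorem shift_mp {τ : ℝ} (t : ℝ) :
    MeasurePreserving (fun θ => t + θ) (volume.restrict (Icc (-τ) (0:ℝ)))
      (volume.restrict (Icc (t - τ) t)) := by
  have h := (measurePreserving_add_left (volume : Measure ℝ) t).restrict_preimage
      (measurableSet_Icc (a := t - τ) (b := t))
  have hpre : ((t + ·) ⁻¹' Icc (t - τ) t) = Icc (-τ) (0:ℝ) := by
    ext θ; simp only [mem_preimage, mem_Icc]; constructor <;> intro h <;>
      exact ⟨by linarith [h.1], by linarith [h.2]⟩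
  rwa [hpre] at h

theorem sub_mp (s τ : ℝ) :
    MeasurePreserving (fun u => u - s) (volume.restrict (Ico (s - τ) s))
      (volume.restrict (Ico (-τ) (0:ℝ))) := by
  have h := (measurePreserving_sub_right (volume : Measure ℝ) s).restrict_preimage
      (measurableSet_Ico (a := -τ) (b := (0:ℝ)))
  have hpre : ((· - s) ⁻¹' Ico (-τ) (0:ℝ)) = Ico (s - τ) s := by
    ext u; simp only [mem_preimage, mem_Ico]; constructor <;> intro h <;>
      exact ⟨by linarith [h.1], by linarith [h.2]⟩
  rwa [hpre] at h

theorem extf_mem {τ s : ℝ} (hτ : 0 < τ) {ψ z : ℝ → Evec d}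
    (hψ : MemLp ψ 2 (volume.restrict (Icc (-τ) (0:ℝ))))
    (hz : MemLp z 2 (volume.restrict (Icc s (s+τ)))) :
    MemLp (extf s ψ z) 2 (volume.restrict (Icc (s-τ) (s+τ))) := by
  have hfun : extf s ψ z = (Iio s).indicator (fun u => ψ (u - s)) + (Ici s).indicator z := by
    funext u
    by_cases h : u < s
    · have h1 : u ∉ Ici s := by simpa using h
      simp [extf, h, indicator_of_mem (mem_Iio.2 h), indicator_of_notMem h1]
    · have h1 : u ∉ Iio s := by simpa using h
      simp [extf, h, indicator_of_notMem h1, indicator_of_mem (mem_Ici.2 (not_lt.1 h))]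
  rw [hfun]
  have h1 : MemLp ((Iio s).indicator (fun u => ψ (u - s))) 2
      (volume.restrict (Icc (s-τ) (s+τ))) := by
    rw [memLp_indicator_iff_restrict measurableSet_Iio, Measure.restrict_restrict measurableSet_Iio]
    have hset : Iio s ∩ Icc (s-τ) (s+τ) = Ico (s-τ) s := by
      ext u; simp only [mem_inter_iff, mem_Iio, mem_Icc, mem_Ico]
      constructor
      · rintro ⟨h1, h2, h3⟩; exact ⟨h2, h1⟩
      · rintro ⟨h1, h2⟩; exact ⟨h2, h1, by linarith⟩
    rw [hset]
    have hψ' : MemLp ψ 2 (volume.restrict (Ico (-τ) (0:ℝ))) :=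
      hψ.mono_measure (Measure.restrict_mono Ico_subset_Icc_self le_rfl)
    exact hψ'.comp_measurePreserving (sub_mp s τ)
  have h2 : MemLp ((Ici s).indicator z) 2 (volume.restrict (Icc (s-τ) (s+τ))) := by
    rw [memLp_indicator_iff_restrict measurableSet_Ici, Measure.restrict_restrict measurableSet_Ici]
    have hset : Ici s ∩ Icc (s-τ) (s+τ) = Icc s (s+τ) := by
      ext u; simp only [mem_inter_iff, mem_Ici, mem_Icc]
      constructor
      · rintro ⟨h1, h2, h3⟩; exact ⟨h1, h3⟩
      · rintro ⟨h1, h2⟩; exact ⟨h1, by linarith, h2⟩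
    rw [hset]; exact hz
  exact h1.add h2

theorem shift_mem {τ s t : ℝ} (hτ : 0 < τ) (ht : t ∈ Icc s (s+τ)) {ψ z : ℝ → Evec d}
    (hψ : MemLp ψ 2 (volume.restrict (Icc (-τ) (0:ℝ))))
    (hz : MemLp z 2 (volume.restrict (Icc s (s+τ)))) :
    MemLp (fun θ => extf s ψ z (t + θ)) 2 (volume.restrict (Icc (-τ) (0:ℝ))) := by
  have h1 : MemLp (extf s ψ z) 2 (volume.restrict (Icc (t-τ) t)) :=
    (extf_mem hτ hψ hz).mono_measure (Measure.restrict_mono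
      (Icc_subset_Icc (show s-τ ≤ t-τ by linarith [ht.1]) ht.2) le_rfl)
  have h2 := h1.comp_measurePreserving (shift_mp (τ := τ) t)
  exact h2

/-- Cauchy–Schwarz for set integrals. -/
theorem cs_aux {m : Measure ℝ} [IsFiniteMeasure m] {h : ℝ → Evec d} (hh : MemLp h 2 m) :
    ∫ u, ‖h u‖ ∂m ≤ Real.sqrt (m univ).toReal * Real.sqrt (∫ u, ‖h u‖^2 ∂m) := by
  have hpq : Real.HolderConjugate 2 2 := Real.HolderConjugate.two_two
  have h2 : ENNReal.ofReal (2:ℝ) = 2 := by norm_num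
  have key := integral_mul_le_Lp_mul_Lq_of_nonneg (μ := m) hpq
    (f := fun _ => (1:ℝ)) (g := fun u => ‖h u‖)
    (Eventually.of_forall fun _ => zero_le_one)
    (Eventually.of_forall fun u => norm_nonneg _)
    (by rw [h2]; exact memLp_const 1)
    (by rw [h2]; exact hh.norm)
  simp only [one_mul] at key
  calc ∫ u, ‖h u‖ ∂m ≤ (∫ _, (1:ℝ)^(2:ℝ) ∂m) ^ (1/(2:ℝ)) * (∫ u, ‖h u‖^(2:ℝ) ∂m) ^ (1/(2:ℝ)) := key
    _ = Real.sqrt (m univ).toReal * Real.sqrt (∫ u, ‖h u‖^2 ∂m) := by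
        rw [← Real.sqrt_eq_rpow, ← Real.sqrt_eq_rpow]
        congr 1
        · congr 1; simp [integral_const, Measure.real]
        · congr 1; refine integral_congr_ae (Eventually.of_forall fun u => ?_)
          show ‖h u‖ ^ (2:ℝ) = ‖h u‖ ^ (2:ℕ)
          rw [show (2:ℝ) = ((2:ℕ):ℝ) by norm_num, Real.rpow_natCast]

theorem int_sq {m : Measure ℝ} {h : ℝ → Evec d} (hh : MemLp h 2 m) :
    Integrable (fun u => ‖h u‖^2) m := by
  have := hh.integrable_norm_rpow two_ne_zero ENNReal.ofNat_ne_top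
  simp only [ENNReal.toReal_ofNat] at this
  refine this.congr (Eventually.of_forall fun u => ?_)
  show ‖h u‖ ^ (2:ℝ) = ‖h u‖ ^ (2:ℕ)
  rw [show (2:ℝ) = ((2:ℕ):ℝ) by norm_num, Real.rpow_natCast]

theorem change_var (τ t : ℝ) (f : ℝ → ℝ) :
    ∫ θ in Icc (-τ) (0:ℝ), f (t + θ) = ∫ u in Icc (t - τ) t, f u :=
  (shift_mp t).integral_comp (MeasurableEquiv.addLeft t).measurableEmbedding f

variable {τ s M : ℝ} {C : ℝ → ℝ → Mtx d} {ψ : ℝ → Evec d}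

theorem Ct_sm (hCm : StronglyMeasurable (Function.uncurry C)) (t : ℝ)
    {f : ℝ → Evec d} (hf : StronglyMeasurable f) :
    StronglyMeasurable (fun θ : ℝ => C t θ (f (t + θ))) := by
  have h1 : StronglyMeasurable (fun θ : ℝ => (C t θ, f (t + θ))) := by
    refine StronglyMeasurable.prodMk ?_ (hf.comp_measurable (measurable_const.add measurable_id))
    exact hCm.comp_measurable (measurable_const.prodMk measurable_id)
  exact (isBoundedBilinearMap_apply (𝕜 := ℝ) (E := Evec d)
    (F := Evec d)).continuous.comp_stronglyMeasurable h1

theorem Tfun_aesm (hCm : StronglyMeasurable (Function.uncurry C))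
    (hψsm : StronglyMeasurable ψ) {z : ℝ → Evec d} (hzsm : StronglyMeasurable z) :
    AEStronglyMeasurable (Tfun τ s C ψ z) (volume.restrict (Icc s (s+τ))) := by
  have h1 : StronglyMeasurable (fun p : ℝ × ℝ => C p.1 p.2 (extf s ψ z (p.1 + p.2))) := by
    have h2 : StronglyMeasurable (fun p : ℝ × ℝ => (C p.1 p.2, extf s ψ z (p.1 + p.2))) :=
      hCm.prodMk ((extf_sm hψsm hzsm).comp_measurable (measurable_fst.add measurable_snd))
    exact (isBoundedBilinearMap_apply (𝕜 := ℝ) (E := Evec d)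
      (F := Evec d)).continuous.comp_stronglyMeasurable h2
  exact (h1.aestronglyMeasurable
    (μ := (volume.restrict (Icc s (s+τ))).prod
      (volume.restrict (Icc (-τ) (0:ℝ))))).integral_prod_right'

theorem integrable_integrand (hτ : 0 < τ) (hM : 0 ≤ M) {t : ℝ} (ht : t ∈ Icc s (s+τ))
    (hCt : ∀ᵐ θ ∂(volume.restrict (Icc (-τ) (0:ℝ))), ‖C t θ‖ ≤ M)
    (hCm : StronglyMeasurable (Function.uncurry C))
    (hψsm : StronglyMeasurable ψ) (hψ : MemLp ψ 2 (volume.restrict (Icc (-τ) (0:ℝ))))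
    {z : ℝ → Evec d} (hzsm : StronglyMeasurable z)
    (hz : MemLp z 2 (volume.restrict (Icc s (s+τ)))) :
    Integrable (fun θ => C t θ (extf s ψ z (t + θ))) (volume.restrict (Icc (-τ) (0:ℝ))) := by
  haveI := finIcc (-τ) (0:ℝ)
  have hG : MemLp (fun θ => extf s ψ z (t + θ)) 2 (volume.restrict (Icc (-τ) (0:ℝ))) :=
    shift_mem hτ ht hψ hz
  refine Integrable.mono' ((hG.integrable one_le_two).norm.const_mul M) ?_ ?_
  · exact (Ct_sm hCm t (extf_sm hψsm hzsm)).aestronglyMeasurable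
  · filter_upwards [hCt] with θ hθ
    exact le_trans ((C t θ).le_opNorm _) (mul_le_mul_of_nonneg_right hθ (norm_nonneg _))

theorem Tfun_norm_le (hτ : 0 < τ) (hM : 0 ≤ M) {t : ℝ} (ht : t ∈ Icc s (s+τ))
    (hCt : ∀ᵐ θ ∂(volume.restrict (Icc (-τ) (0:ℝ))), ‖C t θ‖ ≤ M)
    (hψsm : StronglyMeasurable ψ) (hψ : MemLp ψ 2 (volume.restrict (Icc (-τ) (0:ℝ))))
    {z : ℝ → Evec d} (hzsm : StronglyMeasurable z)
    (hz : MemLp z 2 (volume.restrict (Icc s (s+τ)))) :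
    ‖Tfun τ s C ψ z t‖ ≤ M * (Real.sqrt τ *
      Real.sqrt (∫ u in Icc (s-τ) (s+τ), ‖extf s ψ z u‖^2)) := by
  haveI := finIcc (-τ) (0:ℝ)
  have hG : MemLp (fun θ => extf s ψ z (t + θ)) 2 (volume.restrict (Icc (-τ) (0:ℝ))) :=
    shift_mem hτ ht hψ hz
  have h1 : ‖Tfun τ s C ψ z t‖ ≤ ∫ θ in Icc (-τ) (0:ℝ), ‖C t θ (extf s ψ z (t + θ))‖ :=
    norm_integral_le_integral_norm _
  have h2 : ∫ θ in Icc (-τ) (0:ℝ), ‖C t θ (extf s ψ z (t + θ))‖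
      ≤ ∫ θ in Icc (-τ) (0:ℝ), M * ‖extf s ψ z (t + θ)‖ := by
    refine integral_mono_of_nonneg (Eventually.of_forall fun θ => norm_nonneg _)
      ((hG.integrable one_le_two).norm.const_mul M) ?_
    filter_upwards [hCt] with θ hθ
    exact le_trans ((C t θ).le_opNorm _) (mul_le_mul_of_nonneg_right hθ (norm_nonneg _))
  have h3 : ∫ θ in Icc (-τ) (0:ℝ), M * ‖extf s ψ z (t + θ)‖
      = M * ∫ θ in Icc (-τ) (0:ℝ), ‖extf s ψ z (t + θ)‖ := integral_const_mul _ _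
  have huniv : ((volume.restrict (Icc (-τ) (0:ℝ))) univ).toReal = τ := by
    rw [Measure.restrict_apply_univ]
    simp [Real.volume_Icc, ENNReal.toReal_ofReal hτ.le]
  have h4 : ∫ θ in Icc (-τ) (0:ℝ), ‖extf s ψ z (t + θ)‖
      ≤ Real.sqrt τ * Real.sqrt (∫ θ in Icc (-τ) (0:ℝ), ‖extf s ψ z (t + θ)‖^2) := by
    have := cs_aux hG
    rwa [huniv] at this
  have h5 : ∫ θ in Icc (-τ) (0:ℝ), ‖extf s ψ z (t + θ)‖^2
      = ∫ u in Icc (t-τ) t, ‖extf s ψ z u‖^2 :=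
    change_var τ t (fun u => ‖extf s ψ z u‖^2)
  have h6 : ∫ u in Icc (t-τ) t, ‖extf s ψ z u‖^2
      ≤ ∫ u in Icc (s-τ) (s+τ), ‖extf s ψ z u‖^2 := by
    refine setIntegral_mono_set (int_sq (extf_mem hτ hψ hz)) ?_ ?_
    · exact Eventually.of_forall fun u => by positivity
    · exact HasSubset.Subset.eventuallyLE
        (Icc_subset_Icc (by linarith [ht.1]) ht.2)
  calc ‖Tfun τ s C ψ z t‖ ≤ M * ∫ θ in Icc (-τ) (0:ℝ), ‖extf s ψ z (t + θ)‖ := by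
        rw [← h3]; exact le_trans h1 h2
    _ ≤ M * (Real.sqrt τ * Real.sqrt (∫ u in Icc (s-τ) (s+τ), ‖extf s ψ z u‖^2)) := by
        refine mul_le_mul_of_nonneg_left (le_trans h4 ?_) hM
        refine mul_le_mul_of_nonneg_left ?_ (Real.sqrt_nonneg _)
        rw [h5] at *
        exact Real.sqrt_le_sqrt h6

theorem Tfun_mem (hτ : 0 < τ) (hM : 0 ≤ M)
    (hCM : ∀ᵐ t ∂(volume.restrict (Icc s (s+τ))),
      ∀ᵐ θ ∂(volume.restrict (Icc (-τ) (0:ℝ))), ‖C t θ‖ ≤ M)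
    (hCm : StronglyMeasurable (Function.uncurry C))
    (hψsm : StronglyMeasurable ψ) (hψ : MemLp ψ 2 (volume.restrict (Icc (-τ) (0:ℝ))))
    {z : ℝ → Evec d} (hzsm : StronglyMeasurable z)
    (hz : MemLp z 2 (volume.restrict (Icc s (s+τ)))) :
    MemLp (Tfun τ s C ψ z) 2 (volume.restrict (Icc s (s+τ))) := by
  haveI := finIcc s (s+τ)
  refine MemLp.of_bound (Tfun_aesm hCm hψsm hzsm)
    (M * (Real.sqrt τ * Real.sqrt (∫ u in Icc (s-τ) (s+τ), ‖extf s ψ z u‖^2))) ?_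
  filter_upwards [hCM, ae_restrict_mem measurableSet_Icc] with t hCt ht
  exact Tfun_norm_le hτ hM ht hCt hψsm hψ hzsm hz

theorem step (hτ : 0 < τ) (hM : 0 ≤ M)
    (hCM : ∀ᵐ t ∂(volume.restrict (Icc s (s+τ))),
      ∀ᵐ θ ∂(volume.restrict (Icc (-τ) (0:ℝ))), ‖C t θ‖ ≤ M)
    (hCm : StronglyMeasurable (Function.uncurry C))
    (hψsm : StronglyMeasurable ψ) (hψ : MemLp ψ 2 (volume.restrict (Icc (-τ) (0:ℝ))))
    {f g : ℝ → Evec d} (hfsm : StronglyMeasurable f)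
    (hf : MemLp f 2 (volume.restrict (Icc s (s+τ))))
    (hgsm : StronglyMeasurable g) (hg : MemLp g 2 (volume.restrict (Icc s (s+τ)))) :
    ∀ᵐ t ∂(volume.restrict (Icc s (s+τ))),
      ‖Tfun τ s C ψ f t - Tfun τ s C ψ g t‖^2
        ≤ M^2 * τ * ∫ u in Icc s t, ‖f u - g u‖^2 := by
  haveI := finIcc (-τ) (0:ℝ)
  filter_upwards [hCM, ae_restrict_mem measurableSet_Icc] with t hCt ht
  have hGf : MemLp (fun θ => extf s ψ f (t + θ)) 2 (volume.restrict (Icc (-τ) (0:ℝ))) :=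
    shift_mem hτ ht hψ hf
  have hGg : MemLp (fun θ => extf s ψ g (t + θ)) 2 (volume.restrict (Icc (-τ) (0:ℝ))) :=
    shift_mem hτ ht hψ hg
  have hIf := integrable_integrand hτ hM ht hCt hCm hψsm hψ hfsm hf
  have hIg := integrable_integrand hτ hM ht hCt hCm hψsm hψ hgsm hg
  -- difference as a single integral
  have hsub : Tfun τ s C ψ f t - Tfun τ s C ψ g t
      = ∫ θ in Icc (-τ) (0:ℝ), C t θ (extf s ψ f (t + θ) - extf s ψ g (t + θ)) := by
    rw [Tfun, Tfun, ← integral_sub hIf hIg]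
    refine integral_congr_ae (Eventually.of_forall fun θ => ?_)
    show C t θ (extf s ψ f (t + θ)) - C t θ (extf s ψ g (t + θ)) = _
    rw [← map_sub]
  -- pointwise norm identity for the difference of extensions
  have hpt : ∀ u, ‖extf s ψ f u - extf s ψ g u‖
      = (Ici s).indicator (fun u => ‖f u - g u‖) u := by
    intro u
    by_cases h : u < s
    · have h1 : u ∉ Ici s := by simpa using h
      simp [extf, h, indicator_of_notMem h1]
    · rw [indicator_of_mem (mem_Ici.2 (not_lt.1 h))]
      simp only [extf, if_neg h]
  -- norm bound
  have hIsub : Integrable (fun θ => ‖extf s ψ f (t + θ) - extf s ψ g (t + θ)‖)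
      (volume.restrict (Icc (-τ) (0:ℝ))) := ((hGf.sub hGg).integrable one_le_two).norm
  have h1 : ‖Tfun τ s C ψ f t - Tfun τ s C ψ g t‖
      ≤ M * ∫ θ in Icc (-τ) (0:ℝ), ‖extf s ψ f (t + θ) - extf s ψ g (t + θ)‖ := by
    rw [hsub]
    refine le_trans (norm_integral_le_integral_norm _) ?_
    rw [← integral_const_mul]
    refine integral_mono_of_nonneg (Eventually.of_forall fun θ => norm_nonneg _)
      (hIsub.const_mul M) ?_
    filter_upwards [hCt] with θ hθ
    exact le_trans ((C t θ).le_opNorm _) (mul_le_mul_of_nonneg_right hθ (norm_nonneg _))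
  -- change of variables and reduction to [s, t]
  have h2 : ∫ θ in Icc (-τ) (0:ℝ), ‖extf s ψ f (t + θ) - extf s ψ g (t + θ)‖
      = ∫ u in Icc s t, ‖f u - g u‖ := by
    rw [change_var τ t (fun u => ‖extf s ψ f u - extf s ψ g u‖)]
    have : ∀ u, ‖extf s ψ f u - extf s ψ g u‖
        = (Ici s).indicator (fun u => ‖f u - g u‖) u := hpt
    have hset : Icc (t-τ) t ∩ Ici s = Icc s t := by
      ext u
      simp only [mem_inter_iff, mem_Icc, mem_Ici]
      constructor
      · rintro ⟨⟨h1, h2⟩, h3⟩; exact ⟨h3, h2⟩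
      · rintro ⟨h1, h2⟩; exact ⟨⟨by linarith [ht.2], h2⟩, h1⟩
    rw [integral_congr_ae (Eventually.of_forall fun u => this u),
      setIntegral_indicator measurableSet_Ici, hset]
  -- Cauchy–Schwarz on [s, t]
  haveI := finIcc s t
  have hst : MemLp (fun u => f u - g u) 2 (volume.restrict (Icc s t)) :=
    (hf.sub hg).mono_measure (Measure.restrict_mono (Icc_subset_Icc le_rfl ht.2) le_rfl)
  have h3 : ∫ u in Icc s t, ‖f u - g u‖
      ≤ Real.sqrt (t - s) * Real.sqrt (∫ u in Icc s t, ‖f u - g u‖^2) := by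
    have := cs_aux hst
    have huniv : ((volume.restrict (Icc s t)) univ).toReal = t - s := by
      rw [Measure.restrict_apply_univ]
      simp [Real.volume_Icc, ENNReal.toReal_ofReal (sub_nonneg.2 ht.1)]
    rwa [huniv] at this
  have hI0 : 0 ≤ ∫ u in Icc s t, ‖f u - g u‖^2 :=
    integral_nonneg fun u => by positivity
  set I := ∫ u in Icc s t, ‖f u - g u‖^2 with hIdef
  have h4 : ‖Tfun τ s C ψ f t - Tfun τ s C ψ g t‖
      ≤ M * (Real.sqrt (t - s) * Real.sqrt I) := by
    refine le_trans h1 ?_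
    rw [h2]
    exact mul_le_mul_of_nonneg_left h3 hM
  have h5 : ‖Tfun τ s C ψ f t - Tfun τ s C ψ g t‖^2
      ≤ (M * (Real.sqrt (t - s) * Real.sqrt I))^2 :=
    pow_le_pow_left₀ (norm_nonneg _) h4 2
  have h6 : (M * (Real.sqrt (t - s) * Real.sqrt I))^2 = M^2 * ((t - s) * I) := by
    rw [mul_pow, mul_pow, Real.sq_sqrt (sub_nonneg.2 ht.1), Real.sq_sqrt hI0]
  refine le_trans h5 ?_
  rw [h6]
  have : (t - s) * I ≤ τ * I := mul_le_mul_of_nonneg_right (by linarith [ht.2]) hI0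
  calc M^2 * ((t - s) * I) ≤ M^2 * (τ * I) := mul_le_mul_of_nonneg_left this (by positivity)
    _ = M^2 * τ * I := by ring

theorem key (hτ : 0 < τ) (hM : 0 ≤ M)
    (hCM : ∀ᵐ t ∂(volume.restrict (Icc s (s+τ))),
      ∀ᵐ θ ∂(volume.restrict (Icc (-τ) (0:ℝ))), ‖C t θ‖ ≤ M)
    (hCm : StronglyMeasurable (Function.uncurry C))
    (hψsm : StronglyMeasurable ψ) (hψ : MemLp ψ 2 (volume.restrict (Icc (-τ) (0:ℝ)))) :
    ∃ p : Lp (Evec d) 2 (volume.restrict (Icc s (s+τ))),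
      (⇑p =ᵐ[volume.restrict (Icc s (s+τ))] Tfun τ s C ψ ⇑p) ∧
      ∀ q : Lp (Evec d) 2 (volume.restrict (Icc s (s+τ))),
        (⇑q =ᵐ[volume.restrict (Icc s (s+τ))] Tfun τ s C ψ ⇑q) → q = p := by
  haveI := finIcc s (s+τ)
  set T : Lp (Evec d) 2 (volume.restrict (Icc s (s+τ)))
      → Lp (Evec d) 2 (volume.restrict (Icc s (s+τ))) := fun z =>
    (Tfun_mem hτ hM hCM hCm hψsm hψ (Lp.stronglyMeasurable z) (Lp.memLp z)).toLp _ with hT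
  have hTcoe : ∀ z, ⇑(T z) =ᵐ[volume.restrict (Icc s (s+τ))] Tfun τ s C ψ ⇑z :=
    fun z => MemLp.coeFn_toLp _
  -- squared norm formula
  have hnorm_sq : ∀ v : Lp (Evec d) 2 (volume.restrict (Icc s (s+τ))),
      ‖v‖^2 = ∫ a, ‖v a‖^2 ∂(volume.restrict (Icc s (s+τ))) := by
    intro v
    calc ‖v‖^2 = (inner ℝ v v : ℝ) := (real_inner_self_eq_norm_sq v).symm
      _ = ∫ a, (inner ℝ (v a) (v a) : ℝ) ∂(volume.restrict (Icc s (s+τ))) := L2.inner_def v v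
      _ = ∫ a, ‖v a‖^2 ∂(volume.restrict (Icc s (s+τ))) :=
          integral_congr_ae (Eventually.of_forall fun a => real_inner_self_eq_norm_sq _)
  -- iterated a.e. bound
  have iter_bound : ∀ n : ℕ, ∀ z w : Lp (Evec d) 2 (volume.restrict (Icc s (s+τ))),
      ∀ᵐ t ∂(volume.restrict (Icc s (s+τ))),
        ‖(T^[n+1] z) t - (T^[n+1] w) t‖^2
          ≤ (M^2*τ)^(n+1) / (n.factorial : ℝ) * (t-s)^n
            * ∫ u in Icc s (s+τ), ‖z u - w u‖^2 := by
    intro n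
    induction n with
    | zero =>
      intro z w
      have hstep := step hτ hM hCM hCm hψsm hψ (Lp.stronglyMeasurable z) (Lp.memLp z)
        (Lp.stronglyMeasurable w) (Lp.memLp w)
      have hsubint : Integrable (fun u => ‖z u - w u‖^2) (volume.restrict (Icc s (s+τ))) :=
        int_sq ((Lp.memLp z).sub (Lp.memLp w))
      have hN0 : (0:ℝ) ≤ ∫ u in Icc s (s+τ), ‖z u - w u‖^2 :=
        integral_nonneg fun u => by positivity
      filter_upwards [hstep, ae_restrict_mem measurableSet_Icc, hTcoe z, hTcoe w]
        with t h1 ht h2 h3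
      have e1 : T^[0+1] z = T z := by simp
      have e2 : T^[0+1] w = T w := by simp
      rw [e1, e2, h2, h3]
      refine le_trans h1 ?_
      have hmono : ∫ u in Icc s t, ‖z u - w u‖^2 ≤ ∫ u in Icc s (s+τ), ‖z u - w u‖^2 := by
        refine setIntegral_mono_set hsubint (Eventually.of_forall fun u => by positivity) ?_
        exact HasSubset.Subset.eventuallyLE (Icc_subset_Icc le_rfl ht.2)
      calc M^2 * τ * ∫ u in Icc s t, ‖z u - w u‖^2
          ≤ M^2 * τ * ∫ u in Icc s (s+τ), ‖z u - w u‖^2 :=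
            mul_le_mul_of_nonneg_left hmono (by positivity)
        _ = (M^2*τ)^(0+1) / ((0:ℕ).factorial : ℝ) * (t-s)^0
            * ∫ u in Icc s (s+τ), ‖z u - w u‖^2 := by
            simp [Nat.factorial_zero]
    | succ n ih =>
      intro z w
      have ihzw := ih z w
      have hstep := step hτ hM hCM hCm hψsm hψ
        (Lp.stronglyMeasurable (T^[n+1] z)) (Lp.memLp (T^[n+1] z))
        (Lp.stronglyMeasurable (T^[n+1] w)) (Lp.memLp (T^[n+1] w))
      have hint : Integrable (fun u => ‖(T^[n+1] z) u - (T^[n+1] w) u‖^2)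
          (volume.restrict (Icc s (s+τ))) :=
        int_sq ((Lp.memLp (T^[n+1] z)).sub (Lp.memLp (T^[n+1] w)))
      have hN0 : (0:ℝ) ≤ ∫ u in Icc s (s+τ), ‖z u - w u‖^2 :=
        integral_nonneg fun u => by positivity
      filter_upwards [hstep, ae_restrict_mem measurableSet_Icc,
        hTcoe (T^[n+1] z), hTcoe (T^[n+1] w)] with t h1 ht h2 h3
      have e1 : (T^[n+1+1] z) t = Tfun τ s C ψ (⇑(T^[n+1] z)) t := by
        rw [Function.iterate_succ_apply' T (n+1) z]; exact h2
      have e2 : (T^[n+1+1] w) t = Tfun τ s C ψ (⇑(T^[n+1] w)) t := by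
        rw [Function.iterate_succ_apply' T (n+1) w]; exact h3
      rw [e1, e2]
      refine le_trans h1 ?_
      set N := ∫ u in Icc s (s+τ), ‖z u - w u‖^2 with hNdef
      set c := (M^2*τ)^(n+1) / (n.factorial : ℝ) with hcdef
      have hc0 : 0 ≤ c := by positivity
      -- bound the inner integral using the induction hypothesis
      have hmono : ∫ u in Icc s t, ‖(T^[n+1] z) u - (T^[n+1] w) u‖^2
          ≤ ∫ u in Icc s t, c * (u-s)^n * N := by
        refine integral_mono_ae
          (hint.mono_measure (Measure.restrict_mono (Icc_subset_Icc le_rfl ht.2) le_rfl))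
          ?_ ?_
        · have hcont : Continuous (fun u : ℝ => c * (u-s)^n * N) :=
            (continuous_const.mul ((continuous_id.sub continuous_const).pow n)).mul
              continuous_const
          exact hcont.integrableOn_Icc
        · exact ae_restrict_of_ae_restrict_of_subset (Icc_subset_Icc le_rfl ht.2) ihzw
      have hpowint : ∫ u in Icc s t, (u-s)^n = (t-s)^(n+1) / (n+1) := by
        rw [integral_Icc_eq_integral_Ioc, ← intervalIntegral.integral_of_le ht.1]
        have := intervalIntegral.integral_comp_sub_right (a := s) (b := t)
          (fun u => u^n) s
        rw [this, sub_self, integral_pow, zero_pow (Nat.succ_ne_zero n), sub_zero]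
      have hgint : ∫ u in Icc s t, c * (u-s)^n * N = (c * N) * ((t-s)^(n+1) / (n+1)) := by
        have : (fun u => c * (u-s)^n * N) = fun u => (c * N) * (u-s)^n := by
          funext u; ring
        rw [this, integral_const_mul, hpowint]
      have hfac : (((n+1).factorial : ℕ) : ℝ) = ((n:ℝ)+1) * (n.factorial : ℝ) := by
        push_cast [Nat.factorial_succ]; ring
      have hfacne : ((n.factorial : ℕ) : ℝ) ≠ 0 := Nat.cast_ne_zero.2 n.factorial_pos.ne'
      have hn1 : ((n:ℝ)+1) ≠ 0 := by positivity
      calc M^2 * τ * ∫ u in Icc s t, ‖(T^[n+1] z) u - (T^[n+1] w) u‖^2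
          ≤ M^2 * τ * ((c * N) * ((t-s)^(n+1) / (n+1))) := by
            rw [← hgint]; exact mul_le_mul_of_nonneg_left hmono (by positivity)
        _ = (M^2*τ)^(n+1+1) / ((n+1).factorial : ℝ) * (t-s)^(n+1) * N := by
            rw [hcdef, hfac]
            field_simp
            ring
  -- Lipschitz bound for the iterates
  have lips : ∀ n : ℕ, ∀ z w : Lp (Evec d) 2 (volume.restrict (Icc s (s+τ))),
      ‖T^[n+1] z - T^[n+1] w‖^2 ≤ (M^2*τ^2)^(n+1) / (n.factorial : ℝ) * ‖z - w‖^2 := by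
    intro n z w
    have hb := iter_bound n z w
    have hN : ∫ u in Icc s (s+τ), ‖z u - w u‖^2 = ‖z - w‖^2 := by
      rw [hnorm_sq (z - w)]
      refine integral_congr_ae ((Lp.coeFn_sub z w).mono fun u hu => ?_)
      simp only [hu, Pi.sub_apply]
    have hdiffint : Integrable (fun t => ‖(T^[n+1] z) t - (T^[n+1] w) t‖^2)
        (volume.restrict (Icc s (s+τ))) :=
      int_sq ((Lp.memLp (T^[n+1] z)).sub (Lp.memLp (T^[n+1] w)))
    have hN0 : (0:ℝ) ≤ ∫ u in Icc s (s+τ), ‖z u - w u‖^2 :=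
      integral_nonneg fun u => by positivity
    set N := ∫ u in Icc s (s+τ), ‖z u - w u‖^2 with hNdef
    set c := (M^2*τ)^(n+1) / (n.factorial : ℝ) with hcdef
    have hc0 : 0 ≤ c := by positivity
    have h1 : ‖T^[n+1] z - T^[n+1] w‖^2
        = ∫ t in Icc s (s+τ), ‖(T^[n+1] z) t - (T^[n+1] w) t‖^2 := by
      rw [hnorm_sq (T^[n+1] z - T^[n+1] w)]
      refine integral_congr_ae ((Lp.coeFn_sub (T^[n+1] z) (T^[n+1] w)).mono fun u hu => ?_)
      simp only [hu, Pi.sub_apply]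
    have h2 : ∫ t in Icc s (s+τ), ‖(T^[n+1] z) t - (T^[n+1] w) t‖^2
        ≤ ∫ _ in Icc s (s+τ), c * τ^n * N := by
      refine integral_mono_ae hdiffint (integrable_const _) ?_
      filter_upwards [hb, ae_restrict_mem measurableSet_Icc] with t hbt ht
      refine le_trans hbt ?_
      have hts : (t-s)^n ≤ τ^n := by
        refine pow_le_pow_left₀ (by linarith [ht.1]) (by linarith [ht.2]) n
      have : c * (t-s)^n ≤ c * τ^n := mul_le_mul_of_nonneg_left hts hc0
      exact mul_le_mul_of_nonneg_right this hN0
    have h3 : ∫ _ in Icc s (s+τ), c * τ^n * N ∂volume = (c * τ^n * N) * τ := by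
      rw [setIntegral_const]
      simp [Real.volume_Icc, ENNReal.toReal_ofReal hτ.le, smul_eq_mul, max_eq_left hτ.le]
      ring
    rw [h1, ← hN]
    refine le_trans h2 ?_
    rw [h3]
    have : (M^2*τ^2)^(n+1) / (n.factorial : ℝ) = c * τ^n * τ := by
      rw [hcdef]
      field_simp
      ring
    rw [this]
    exact le_of_eq (by ring)
  -- choose n making the iterate a contraction
  obtain ⟨n, hn⟩ : ∃ n : ℕ, (M^2*τ^2)^(n+1) / (n.factorial : ℝ) < 1 := by
    have hB : (0:ℝ) ≤ M^2*τ^2 := by positivity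
    have htend := FloorSemiring.tendsto_pow_div_factorial_atTop (K := ℝ) (M^2*τ^2)
    have h2 : ∀ᶠ n : ℕ in atTop, (M^2*τ^2)^n / (n.factorial : ℝ) < 1/(M^2*τ^2+1) :=
      htend.eventually_lt_const (by positivity)
    obtain ⟨n, hn⟩ := h2.exists
    refine ⟨n, ?_⟩
    have he : (M^2*τ^2)^(n+1) / (n.factorial : ℝ)
        = (M^2*τ^2) * ((M^2*τ^2)^n / (n.factorial : ℝ)) := by ring
    rw [he]
    calc (M^2*τ^2) * ((M^2*τ^2)^n / (n.factorial : ℝ))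
        ≤ (M^2*τ^2) * (1/(M^2*τ^2+1)) := mul_le_mul_of_nonneg_left hn.le hB
      _ < 1 := by
          rw [mul_one_div]
          refine (div_lt_one (by positivity)).2 (lt_add_one _)
  set K := Real.sqrt ((M^2*τ^2)^(n+1) / (n.factorial : ℝ)) with hKdef
  have hK1 : K < 1 := by
    have := Real.sqrt_lt_sqrt (by positivity) hn
    rwa [Real.sqrt_one] at this
  have hlip : LipschitzWith K.toNNReal T^[n+1] := by
    refine LipschitzWith.of_dist_le_mul fun z w => ?_
    rw [dist_eq_norm, dist_eq_norm, Real.coe_toNNReal _ (Real.sqrt_nonneg _)]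
    have h1 := lips n z w
    have h2 := Real.sqrt_le_sqrt h1
    rwa [Real.sqrt_sq (norm_nonneg _), Real.sqrt_mul (by positivity) _,
      Real.sqrt_sq (norm_nonneg _)] at h2
  have hcon : ContractingWith K.toNNReal T^[n+1] := by
    constructor
    · have : (K.toNNReal : ℝ) < 1 := by
        rwa [Real.coe_toNNReal _ (Real.sqrt_nonneg _)]
      exact_mod_cast this
    · exact hlip
  haveI : Nonempty (Lp (Evec d) 2 (volume.restrict (Icc s (s+τ)))) := ⟨0⟩
  have hfix : Function.IsFixedPt T (hcon.fixedPoint T^[n+1]) :=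
    hcon.isFixedPt_fixedPoint_iterate
  refine ⟨hcon.fixedPoint T^[n+1], ?_, ?_⟩
  · have h := hTcoe (hcon.fixedPoint T^[n+1])
    rw [hfix] at h
    exact h
  · intro q hq
    have hfixq : Function.IsFixedPt T q := Lp.ext ((hTcoe q).trans hq.symm)
    exact hcon.fixedPoint_unique (hfixq.iterate (n+1))

end REproof

/-- If `C ∈ L^∞([s,s+τ]×[−τ,0], ℝ^{d×d})` and `φ ∈ X = L²([−τ,0], ℝ^d)`,
then the initial value problem given by the renewal equation
`x(t) = ∫_{−τ}^0 C(t,θ) x_t(θ) dθ` for `t ∈ (s, s+τ]` together with `x_s = φ` has a unique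
solution `x ∈ L²([s,s+τ], ℝ^d)` on `[s,s+τ]`. -/
theorem existence_uniqueness_RE
    (d : ℕ) (hd : 0 < d) (τ s : ℝ) (hτ : 0 < τ)
    (C : ℝ → ℝ → Mtx d)
    (hCmeas : StronglyMeasurable (Function.uncurry C))
    (hCbdd : MemLp (Function.uncurry C) ⊤
      (volume.restrict (Set.Icc s (s+τ) ×ˢ Set.Icc (-τ) (0:ℝ))))
    (φ : ℝ → Evec d)
    (hφ : MemLp φ 2 (volume.restrict (Set.Icc (-τ) (0:ℝ)))) :
    ∃ x : ℝ → Evec d,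
      (∀ᵐ θ ∂(volume.restrict (Set.Icc (-τ) (0:ℝ))), x (s + θ) = φ θ) ∧
      MemLp x 2 (volume.restrict (Set.Icc s (s+τ))) ∧
      (∀ᵐ t ∂(volume.restrict (Set.Ioc s (s+τ))),
        x t = ∫ θ in Set.Icc (-τ) (0:ℝ), (C t θ) (x (t+θ))) ∧
      ∀ y : ℝ → Evec d,
        (∀ᵐ θ ∂(volume.restrict (Set.Icc (-τ) (0:ℝ))), y (s + θ) = φ θ) →
        MemLp y 2 (volume.restrict (Set.Icc s (s+τ))) →
        (∀ᵐ t ∂(volume.restrict (Set.Ioc s (s+τ))),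
          y t = ∫ θ in Set.Icc (-τ) (0:ℝ), (C t θ) (y (t+θ))) →
        y =ᵐ[volume.restrict (Set.Icc s (s+τ))] x := by
  classical
  have hφm := hφ.aestronglyMeasurable
  set ψ := hφm.mk φ with hψdef
  have hψsm : StronglyMeasurable ψ := hφm.stronglyMeasurable_mk
  have hφψ : φ =ᵐ[volume.restrict (Icc (-τ) (0:ℝ))] ψ := hφm.ae_eq_mk
  have hψ : MemLp ψ 2 (volume.restrict (Icc (-τ) (0:ℝ))) := hφ.ae_eq hφψ
  -- essential bound on the kernel
  set M := (eLpNormEssSup (Function.uncurry C)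
    (volume.restrict (Set.Icc s (s+τ) ×ˢ Set.Icc (-τ) (0:ℝ)))).toReal with hMdef
  have hM : 0 ≤ M := ENNReal.toReal_nonneg
  have hCM : ∀ᵐ t ∂(volume.restrict (Icc s (s+τ))),
      ∀ᵐ θ ∂(volume.restrict (Icc (-τ) (0:ℝ))), ‖C t θ‖ ≤ M := by
    have hlt : eLpNormEssSup (Function.uncurry C)
        (volume.restrict (Set.Icc s (s+τ) ×ˢ Set.Icc (-τ) (0:ℝ))) < ⊤ := by
      have h := hCbdd.2
      rwa [eLpNorm_exponent_top] at h
    have h1 : ∀ᵐ q ∂(volume.restrict (Set.Icc s (s+τ) ×ˢ Set.Icc (-τ) (0:ℝ))),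
        ‖Function.uncurry C q‖ ≤ M := by
      filter_upwards [ae_le_eLpNormEssSup (f := Function.uncurry C)
        (μ := volume.restrict (Set.Icc s (s+τ) ×ˢ Set.Icc (-τ) (0:ℝ)))] with q hq
      have h2 := ENNReal.toReal_mono hlt.ne hq
      rw [enorm_eq_nnnorm, ENNReal.coe_toReal, coe_nnnorm] at h2
      rw [hMdef]
      exact h2
    have heq : (volume : Measure (ℝ × ℝ)).restrict (Set.Icc s (s+τ) ×ˢ Set.Icc (-τ) (0:ℝ))
        = (volume.restrict (Icc s (s+τ))).prod (volume.restrict (Icc (-τ) (0:ℝ))) := by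
      rw [Measure.prod_restrict, Measure.volume_eq_prod]
    rw [heq] at h1
    exact Measure.ae_ae_of_ae_prod h1
  obtain ⟨p, hpfix, huniq⟩ := REproof.key hτ hM hCM hCmeas hψsm hψ
  set x : ℝ → Evec d := REproof.extf s ψ ⇑p with hxdef
  have hpx : ⇑p =ᵐ[volume.restrict (Icc s (s+τ))] x := by
    refine ae_restrict_of_forall_mem measurableSet_Icc fun u hu => ?_
    simp [hxdef, REproof.extf, not_lt.2 hu.1]
  have hres : volume.restrict (Ioc s (s+τ)) = volume.restrict (Icc s (s+τ)) :=
    Measure.restrict_congr_set Ioc_ae_eq_Icc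
  refine ⟨x, ?_, ?_, ?_, ?_⟩
  · -- initial condition
    have h0 : ∀ᵐ θ ∂(volume.restrict (Icc (-τ) (0:ℝ))), θ ≠ (0:ℝ) := by
      rw [ae_iff]
      have hset : {θ : ℝ | ¬ θ ≠ 0} = {(0:ℝ)} := by ext θ; simp
      rw [hset, Measure.restrict_apply (measurableSet_singleton 0)]
      exact measure_mono_null inter_subset_left (measure_singleton 0)
    filter_upwards [hφψ, ae_restrict_mem measurableSet_Icc, h0] with θ hθ1 hθ2 hθ3
    have hlt : s + θ < s := by
      have : θ < 0 := lt_of_le_of_ne hθ2.2 hθ3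
      linarith
    show REproof.extf s ψ ⇑p (s + θ) = φ θ
    simp only [REproof.extf, if_pos hlt]
    rw [show s + θ - s = θ by ring, ← hθ1]
  · -- membership
    exact (Lp.memLp p).ae_eq hpx
  · -- the equation
    rw [hres]
    filter_upwards [hpfix, ae_restrict_mem measurableSet_Icc] with t h1 ht
    have hxt : x t = p t := by simp [hxdef, REproof.extf, not_lt.2 ht.1]
    rw [hxt, h1, hxdef]
    rfl
  · -- uniqueness
    intro y hy1 hy2 hy3
    set zy := hy2.toLp y with hzydef
    have hzy : ⇑zy =ᵐ[volume.restrict (Icc s (s+τ))] y := hy2.coeFn_toLp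
    -- the extension of zy agrees a.e. with y on [s-τ, s+τ]
    have hN1 : volume ({u | ⇑zy u ≠ y u} ∩ Icc s (s+τ)) = 0 := by
      have := ae_iff.1 hzy
      rwa [Measure.restrict_apply' measurableSet_Icc] at this
    have hN2 : volume ({θ | y (s + θ) ≠ ψ θ} ∩ Icc (-τ) (0:ℝ)) = 0 := by
      have hy1' : ∀ᵐ θ ∂(volume.restrict (Icc (-τ) (0:ℝ))), y (s + θ) = ψ θ := by
        filter_upwards [hy1, hφψ] with θ h1 h2
        rw [h1, ← h2]
      have := ae_iff.1 hy1'
      rwa [Measure.restrict_apply' measurableSet_Icc] at this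
    have hbig : volume ({u | REproof.extf s ψ ⇑zy u ≠ y u} ∩ Icc (s-τ) (s+τ)) = 0 := by
      have hsubset : {u | REproof.extf s ψ ⇑zy u ≠ y u} ∩ Icc (s-τ) (s+τ)
          ⊆ ({u | ⇑zy u ≠ y u} ∩ Icc s (s+τ))
            ∪ ((fun u : ℝ => u - s) ⁻¹' ({θ | y (s + θ) ≠ ψ θ} ∩ Icc (-τ) (0:ℝ))) := by
        rintro u ⟨hu1, hu2⟩
        by_cases h : u < s
        · right
          refine ⟨?_, ?_⟩
          · show y (s + (u - s)) ≠ ψ (u - s)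
            rw [show s + (u - s) = u by ring]
            intro hcon
            apply hu1
            simp only [REproof.extf, if_pos h]
            exact hcon.symm
          · simp only [mem_Icc]
            constructor <;> [linarith [hu2.1]; linarith]
        · left
          refine ⟨?_, ?_, hu2.2⟩
          · intro hcon
            apply hu1
            simp only [REproof.extf, if_neg h]
            exact hcon
          · linarith [not_lt.1 h]
      refine measure_mono_null hsubset (measure_union_null hN1 ?_)
      have hpre : ((fun u : ℝ => u - s) ⁻¹' ({θ | y (s + θ) ≠ ψ θ} ∩ Icc (-τ) (0:ℝ)))
          = ((fun u : ℝ => u + (-s)) ⁻¹' ({θ | y (s + θ) ≠ ψ θ} ∩ Icc (-τ) (0:ℝ))) := by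
        ext u; simp [sub_eq_add_neg]
      rw [hpre, measure_preimage_add_right]
      exact hN2
    -- pointwise in t: the integrands agree a.e. in θ
    have hB : ∀ t ∈ Icc s (s+τ), ∀ᵐ θ ∂(volume.restrict (Icc (-τ) (0:ℝ))),
        REproof.extf s ψ ⇑zy (t + θ) = y (t + θ) := by
      intro t ht
      rw [ae_iff, Measure.restrict_apply' measurableSet_Icc]
      refine measure_mono_null ?_ (by
        have := measure_preimage_add (volume : Measure ℝ) t
          ({u | REproof.extf s ψ ⇑zy u ≠ y u} ∩ Icc (s-τ) (s+τ))
        rw [this]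
        exact hbig)
      rintro θ ⟨hθ1, hθ2⟩
      refine ⟨hθ1, ?_⟩
      simp only [mem_Icc] at hθ2 ⊢
      constructor <;> [linarith [ht.1, hθ2.1]; linarith [ht.2, hθ2.2]]
    -- zy is a fixed point
    have hae : ae (volume.restrict (Ioc s (s+τ))) = ae (volume.restrict (Icc s (s+τ))) := by
      rw [hres]
    have hTy : REproof.Tfun τ s C ψ ⇑zy =ᵐ[volume.restrict (Icc s (s+τ))] y := by
      rw [EventuallyEq, ← hae]
      filter_upwards [hy3, ae_restrict_mem measurableSet_Ioc] with t hyt ht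
      have htIcc : t ∈ Icc s (s+τ) := ⟨le_of_lt ht.1, ht.2⟩
      have hcong : ∫ θ in Icc (-τ) (0:ℝ), C t θ (REproof.extf s ψ ⇑zy (t + θ))
          = ∫ θ in Icc (-τ) (0:ℝ), C t θ (y (t + θ)) := by
        refine integral_congr_ae ?_
        filter_upwards [hB t htIcc] with θ hθ
        rw [hθ]
      show REproof.Tfun τ s C ψ ⇑zy t = y t
      rw [REproof.Tfun]
      rw [hcong, ← hyt]
    have hfixq : ⇑zy =ᵐ[volume.restrict (Icc s (s+τ))] REproof.Tfun τ s C ψ ⇑zy :=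
      hzy.trans hTy.symm
    have hq : zy = p := huniq zy hfixq
    calc y =ᵐ[volume.restrict (Icc s (s+τ))] ⇑zy := hzy.symm
      _ =ᵐ[volume.restrict (Icc s (s+τ))] x := by rw [hq]; exact hpx
end
end

section
/- Assume hypotheses H1 and H2. If the operator I_{X⁺} − L_N⁺ F V⁺: X⁺ → X⁺ is invertible, then the finite-dimensional operator I_{X_N⁺} − R_N⁺ F V⁺ P_N⁺: X_N⁺ → X_N⁺ is invertible. Moreover, given W̄ ∈ X_N⁺, the unique solution ŵ ∈ X⁺ of (I_{X⁺} − L_N⁺ F V⁺) w = P_N⁺ W̄ and the unique solution Ŵ ∈ X_N⁺ of (I_{X_N⁺} − R_N⁺ F V⁺ P_N⁺) W = W̄ are related by Ŵ = R_N⁺ ŵ and ŵ = P_N⁺ Ŵ. -/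
open MeasureTheory Set Filter

noncomputable section

/-- The Legendre polynomial of degree `N` (Rodrigues' formula, up to a nonzero
normalization constant, which does not affect its zeros). -/
def leg (N : ℕ) : Polynomial ℝ :=
  Polynomial.derivative^[N] ((Polynomial.X ^ 2 - 1) ^ N)

/-- The `i`-th Lagrange basis polynomial `ℓ_i⁺` at the given nodes, evaluated at `t`. -/
def lagBasis {N : ℕ} (nodes : Fin N → ℝ) (i : Fin N) (t : ℝ) : ℝ :=
  (Lagrange.basis Finset.univ nodes i).eval t

/-- The prolongation operator `P_N⁺` (polynomial interpolation of discrete data). -/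
def PN {d N : ℕ} (nodes : Fin N → ℝ) (W : Fin N → Evec d) (t : ℝ) : Evec d :=
  ∑ i, lagBasis nodes i t • W i

/-- The Lagrange interpolation operator `L_N⁺ = P_N⁺ R_N⁺` at the given nodes. -/
def LN {d N : ℕ} (nodes : Fin N → ℝ) (w : ℝ → Evec d) (t : ℝ) : Evec d :=
  ∑ i, lagBasis nodes i t • w (nodes i)

/-- The operator `F V⁺ : X⁺ → X⁺`: extension of `w` by `0` on `[−τ,0]` followed by `F`. -/
def FVp (d : ℕ) (τ s : ℝ) (C : ℝ → ℝ → Mtx d) (w : ℝ → Evec d) (t : ℝ) : Evec d :=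
  ∫ θ in Set.Icc (-τ) (0:ℝ), (C (s+t) θ) (if 0 < t+θ then w (t+θ) else 0)

/-- `f` belongs to the Sobolev space `H¹([0,h], ℝ^d)` with `H¹` norm at most `m`:
`f` a.e. equals an absolutely continuous function with `L²` derivative `g`, and
`‖f‖²_{L²} + ‖g‖²_{L²} ≤ m²`. -/
def H1BddBy (d : ℕ) (h : ℝ) (f : ℝ → Evec d) (m : ℝ) : Prop :=
  ∃ (a : Evec d) (g : ℝ → Evec d),
    MemLp g 2 (volume.restrict (Set.Icc (0:ℝ) h)) ∧
    (∀ᵐ t ∂(volume.restrict (Set.Icc (0:ℝ) h)), f t = a + ∫ u in (0:ℝ)..t, g u) ∧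
    (eLpNorm f 2 (volume.restrict (Set.Icc (0:ℝ) h))).toReal ^ 2 +
      (eLpNorm g 2 (volume.restrict (Set.Icc (0:ℝ) h))).toReal ^ 2 ≤ m ^ 2

section AuxLemmas

variable {d N : ℕ}

lemma lagBasis_node {nodes : Fin N → ℝ} (hinj : Function.Injective nodes) (i j : Fin N) :
    lagBasis nodes i (nodes j) = if i = j then 1 else 0 := by
  unfold lagBasis
  by_cases hij : i = j
  · subst hij
    simp [Lagrange.eval_basis_self (hinj.injOn) (Finset.mem_univ i)]
  · simp [hij, Lagrange.eval_basis_of_ne hij (Finset.mem_univ j)]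

lemma PN_node {nodes : Fin N → ℝ} (hinj : Function.Injective nodes)
    (W : Fin N → Evec d) (j : Fin N) : PN nodes W (nodes j) = W j := by
  unfold PN
  rw [Finset.sum_eq_single j]
  · rw [lagBasis_node hinj, if_pos rfl, one_smul]
  · intro i _ hij
    rw [lagBasis_node hinj, if_neg hij, zero_smul]
  · intro hj; exact absurd (Finset.mem_univ j) hj

lemma PN_continuous (nodes : Fin N → ℝ) (W : Fin N → Evec d) :
    Continuous (fun t => PN nodes W t) := by
  unfold PN lagBasis
  exact continuous_finset_sum _ fun i _ => (Polynomial.continuous _).smul continuous_const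

lemma LN_continuous (nodes : Fin N → ℝ) (v : ℝ → Evec d) :
    Continuous (fun t => LN nodes v t) := by
  unfold LN lagBasis
  exact continuous_finset_sum _ fun i _ => (Polynomial.continuous _).smul continuous_const

lemma memLp_of_continuous {h : ℝ} {f : ℝ → Evec d} (hf : Continuous f) :
    MemLp f 2 (volume.restrict (Set.Icc (0:ℝ) h)) := by
  haveI : IsFiniteMeasure (volume.restrict (Set.Icc (0:ℝ) h)) := by
    constructor
    rw [Measure.restrict_apply_univ]
    exact isCompact_Icc.measure_lt_top
  obtain ⟨M, hM⟩ := isCompact_Icc.exists_bound_of_continuousOn hf.continuousOn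
  refine MemLp.of_bound hf.aestronglyMeasurable M ?_
  exact (ae_restrict_mem measurableSet_Icc).mono hM

lemma eqOn_of_ae_eq {h : ℝ} (hh : 0 < h) {f g : ℝ → Evec d}
    (hf : Continuous f) (hg : Continuous g)
    (hfg : f =ᵐ[volume.restrict (Set.Icc (0:ℝ) h)] g) :
    ∀ t ∈ Set.Icc (0:ℝ) h, f t = g t := by
  intro t ht
  by_contra hne
  have hopen : IsOpen {x | f x ≠ g x} := isOpen_ne_fun hf hg
  obtain ⟨δ, hδ, hball⟩ := Metric.isOpen_iff.mp hopen t hne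
  have h0 : volume ({x | f x ≠ g x} ∩ Set.Icc (0:ℝ) h) = 0 := by
    have h1 := hfg
    rw [Filter.EventuallyEq, MeasureTheory.ae_iff,
      Measure.restrict_apply' measurableSet_Icc] at h1
    exact h1
  obtain ⟨h0t, hth⟩ := ht
  have hab : max 0 (t - δ) < min h (t + δ) := by
    apply max_lt <;> apply lt_min <;> linarith
  have hsub : Set.Ioo (max 0 (t - δ)) (min h (t + δ)) ⊆
      {x | f x ≠ g x} ∩ Set.Icc (0:ℝ) h := by
    intro x hx
    obtain ⟨hx1, hx2⟩ := hx
    have ha1 : t - δ ≤ max 0 (t - δ) := le_max_right _ _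
    have ha2 : (0:ℝ) ≤ max 0 (t - δ) := le_max_left _ _
    have hb1 : min h (t + δ) ≤ t + δ := min_le_right _ _
    have hb2 : min h (t + δ) ≤ h := min_le_left _ _
    refine ⟨hball ?_, ⟨by linarith, by linarith⟩⟩
    rw [Metric.mem_ball, Real.dist_eq, abs_lt]
    constructor <;> linarith
  have hvol : volume (Set.Ioo (max 0 (t - δ)) (min h (t + δ))) = 0 :=
    measure_mono_null hsub h0
  rw [Real.volume_Ioo] at hvol
  have := ENNReal.ofReal_eq_zero.mp hvol
  linarith

lemma FVp_congr {τ s h : ℝ} {C : ℝ → ℝ → Mtx d} {w w' : ℝ → Evec d}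
    (hww' : ∀ x ∈ Set.Icc (0:ℝ) h, w x = w' x) {t : ℝ} (ht : t ∈ Set.Icc (0:ℝ) h) :
    FVp d τ s C w t = FVp d τ s C w' t := by
  unfold FVp
  apply setIntegral_congr_fun measurableSet_Icc
  intro θ hθ
  obtain ⟨ht1, ht2⟩ := ht
  obtain ⟨hθ1, hθ2⟩ := hθ
  dsimp only
  by_cases hpos : 0 < t + θ
  · rw [if_pos hpos, if_pos hpos, hww' (t + θ) ⟨le_of_lt hpos, by linarith⟩]
  · rw [if_neg hpos, if_neg hpos]

lemma FVp_congr_ae {τ s h : ℝ} {C : ℝ → ℝ → Mtx d} {w w' : ℝ → Evec d}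
    (hww' : w =ᵐ[volume.restrict (Set.Icc (0:ℝ) h)] w') {t : ℝ}
    (ht : t ∈ Set.Icc (0:ℝ) h) :
    FVp d τ s C w t = FVp d τ s C w' t := by
  unfold FVp
  apply integral_congr_ae
  have h0 : volume ({x | w x ≠ w' x} ∩ Set.Icc (0:ℝ) h) = 0 := by
    have h1 := hww'
    rw [Filter.EventuallyEq, MeasureTheory.ae_iff,
      Measure.restrict_apply' measurableSet_Icc] at h1
    exact h1
  have h1 : volume ((fun θ => t + θ) ⁻¹' ({x | w x ≠ w' x} ∩ Set.Icc (0:ℝ) h)) = 0 := by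
    rw [measure_preimage_add]; exact h0
  have h2 : ∀ᵐ θ ∂(volume : Measure ℝ),
      θ ∉ (fun θ => t + θ) ⁻¹' ({x | w x ≠ w' x} ∩ Set.Icc (0:ℝ) h) := by
    rw [MeasureTheory.ae_iff]
    simp only [not_not]
    exact h1
  obtain ⟨ht1, ht2⟩ := ht
  filter_upwards [ae_restrict_of_ae h2, ae_restrict_mem measurableSet_Icc] with θ hθ hθmem
  obtain ⟨hm1, hm2⟩ := hθmem
  by_cases hpos : 0 < t + θ
  · rw [if_pos hpos, if_pos hpos]
    have heq : w (t + θ) = w' (t + θ) := by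
      by_contra hne
      exact hθ ⟨hne, ⟨le_of_lt hpos, show t + θ ≤ h by linarith⟩⟩
    rw [heq]
  · rw [if_neg hpos, if_neg hpos]

end AuxLemmas

/-- Assume H1 and H2. If the operator `I_{X⁺} − L_N⁺ F V⁺ : X⁺ → X⁺` is
invertible, then the finite-dimensional operator `I_{X_N⁺} − R_N⁺ F V⁺ P_N⁺` is invertible.
Moreover, given `W̄ ∈ X_N⁺`, the unique solution `ŵ ∈ X⁺` of
`(I − L_N⁺ F V⁺) w = P_N⁺ W̄` and the unique solution `Ŵ ∈ X_N⁺` of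
`(I − R_N⁺ F V⁺ P_N⁺) W = W̄` are related by `Ŵ = R_N⁺ ŵ` and `ŵ = P_N⁺ Ŵ`. -/
theorem discrete_vs_continuous_collocation
    (d : ℕ) (hd : 0 < d) (τ h s : ℝ) (hτ : 0 < τ) (hh : 0 < h)
    (N : ℕ) (hN : 0 < N)
    (C : ℝ → ℝ → Mtx d)
    (hCmeas : StronglyMeasurable (Function.uncurry C))
    -- Hypothesis H1: C ∈ L^∞([s,s+h]×[−τ,0], ℝ^{d×d})
    (hH1 : MemLp (Function.uncurry C) ⊤
      (volume.restrict (Set.Icc s (s+h) ×ˢ Set.Icc (-τ) (0:ℝ))))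
    -- Hypothesis H2: F V⁺ : X⁺ → X⁺ has range in H¹ and is bounded as X⁺ → H¹
    (hH2 : ∃ b : ℝ, ∀ w : ℝ → Evec d,
      MemLp w 2 (volume.restrict (Set.Icc (0:ℝ) h)) →
      H1BddBy d h (FVp d τ s C w)
        (b * (eLpNorm w 2 (volume.restrict (Set.Icc (0:ℝ) h))).toReal))
    -- the collocation nodes are the zeros of the Legendre polynomial of degree N
    -- rescaled to [0,h]
    (nodes : Fin N → ℝ) (hmono : StrictMono nodes)
    (hmem : ∀ i, nodes i ∈ Set.Icc (0:ℝ) h)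
    (hzero : ∀ i, (leg N).eval (2 * nodes i / h - 1) = 0)
    -- the operator I_{X⁺} − L_N⁺ F V⁺ : X⁺ → X⁺ is invertible
    (hinv : ∀ f : ℝ → Evec d, MemLp f 2 (volume.restrict (Set.Icc (0:ℝ) h)) →
      ∃ w : ℝ → Evec d, MemLp w 2 (volume.restrict (Set.Icc (0:ℝ) h)) ∧
        ((fun t => w t - LN nodes (FVp d τ s C w) t)
          =ᵐ[volume.restrict (Set.Icc (0:ℝ) h)] f) ∧
        ∀ w' : ℝ → Evec d, MemLp w' 2 (volume.restrict (Set.Icc (0:ℝ) h)) →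
          ((fun t => w' t - LN nodes (FVp d τ s C w') t)
            =ᵐ[volume.restrict (Set.Icc (0:ℝ) h)] f) →
          w' =ᵐ[volume.restrict (Set.Icc (0:ℝ) h)] w) :
    -- the operator I_{X_N⁺} − R_N⁺ F V⁺ P_N⁺ : X_N⁺ → X_N⁺ is invertible
    Function.Bijective
      (fun W : Fin N → Evec d =>
        (fun i => W i - FVp d τ s C (PN nodes W) (nodes i))) ∧
    -- relation between the continuous and discrete solutions
    ∀ Wbar : Fin N → Evec d,
      (∃ what : ℝ → Evec d, ∀ t ∈ Set.Icc (0:ℝ) h,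
        what t - LN nodes (FVp d τ s C what) t = PN nodes Wbar t) ∧
      (∀ what : ℝ → Evec d,
        (∀ t ∈ Set.Icc (0:ℝ) h,
          what t - LN nodes (FVp d τ s C what) t = PN nodes Wbar t) →
        ∀ What : Fin N → Evec d,
          (∀ i, What i - FVp d τ s C (PN nodes What) (nodes i) = Wbar i) →
          (∀ i, What i = what (nodes i)) ∧
          (∀ t ∈ Set.Icc (0:ℝ) h, what t = PN nodes What t)) := by
  have hinj : Function.Injective nodes := hmono.injective
  -- the fundamental algebraic identity
  have keyid : ∀ (W : Fin N → Evec d) (t : ℝ),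
      PN nodes W t - LN nodes (FVp d τ s C (PN nodes W)) t
        = PN nodes (fun i => W i - FVp d τ s C (PN nodes W) (nodes i)) t := by
    intro W t
    simp only [PN, LN, smul_sub, Finset.sum_sub_distrib]
  -- uniqueness of continuous solutions of the collocation equation
  have uniq : ∀ (f u v : ℝ → Evec d), Continuous u → Continuous v →
      MemLp f 2 (volume.restrict (Set.Icc (0:ℝ) h)) →
      (∀ t, u t - LN nodes (FVp d τ s C u) t = f t) →
      (∀ t, v t - LN nodes (FVp d τ s C v) t = f t) →
      ∀ t ∈ Set.Icc (0:ℝ) h, u t = v t := by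
    intro f u v hu hv hf hueq hveq
    obtain ⟨w, hwm, hweq, hwuniq⟩ := hinv f hf
    have h1 : u =ᵐ[volume.restrict (Set.Icc (0:ℝ) h)] w :=
      hwuniq u (memLp_of_continuous hu) (MeasureTheory.ae_of_all _ hueq)
    have h2 : v =ᵐ[volume.restrict (Set.Icc (0:ℝ) h)] w :=
      hwuniq v (memLp_of_continuous hv) (MeasureTheory.ae_of_all _ hveq)
    exact eqOn_of_ae_eq hh hu hv (h1.trans h2.symm)
  -- surjectivity of the discrete operator
  have hsurj : Function.Surjective
      (fun W : Fin N → Evec d =>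
        (fun i => W i - FVp d τ s C (PN nodes W) (nodes i))) := by
    intro Wbar
    obtain ⟨w, hwm, hweq, _⟩ :=
      hinv (fun t => PN nodes Wbar t) (memLp_of_continuous (PN_continuous nodes Wbar))
    set wh : ℝ → Evec d := fun t => PN nodes Wbar t + LN nodes (FVp d τ s C w) t with hwhdef
    have hae : w =ᵐ[volume.restrict (Set.Icc (0:ℝ) h)] wh := by
      filter_upwards [hweq] with t ht
      rw [hwhdef]
      dsimp only at ht ⊢
      rw [← ht]
      abel
    have hFV : ∀ t ∈ Set.Icc (0:ℝ) h, FVp d τ s C wh t = FVp d τ s C w t :=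
      fun t ht => FVp_congr_ae hae.symm ht
    refine ⟨fun i => Wbar i + FVp d τ s C w (nodes i), ?_⟩
    have hwhPN : wh = PN nodes (fun i => Wbar i + FVp d τ s C w (nodes i)) := by
      funext t
      simp only [hwhdef, PN, LN, smul_add, Finset.sum_add_distrib]
    funext i
    dsimp only
    rw [← hwhPN, hFV (nodes i) (hmem i)]
    abel
  -- injectivity of the discrete operator
  have hinjT : Function.Injective
      (fun W : Fin N → Evec d =>
        (fun i => W i - FVp d τ s C (PN nodes W) (nodes i))) := by
    intro W W' hWW'
    dsimp only at hWW'
    have h1 : ∀ t, PN nodes W t - LN nodes (FVp d τ s C (PN nodes W)) t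
        = PN nodes (fun i => W i - FVp d τ s C (PN nodes W) (nodes i)) t := keyid W
    have h2 : ∀ t, PN nodes W' t - LN nodes (FVp d τ s C (PN nodes W')) t
        = PN nodes (fun i => W i - FVp d τ s C (PN nodes W) (nodes i)) t := by
      intro t
      rw [hWW']
      exact keyid W' t
    have heq := uniq _ (fun t => PN nodes W t) (fun t => PN nodes W' t)
      (PN_continuous nodes W) (PN_continuous nodes W')
      (memLp_of_continuous (PN_continuous nodes _)) h1 h2
    funext j
    have := heq (nodes j) (hmem j)
    simpa only [PN_node hinj] using this
  refine ⟨⟨hinjT, hsurj⟩, ?_⟩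
  intro Wbar
  constructor
  · -- existence of a continuous solution: take PN What
    obtain ⟨What, hWhat⟩ := hsurj Wbar
    dsimp only at hWhat
    refine ⟨fun t => PN nodes What t, fun t ht => ?_⟩
    dsimp only
    rw [keyid What t, hWhat]
  · -- relation between the solutions
    intro what hwhat What hWhat
    set u : ℝ → Evec d := fun t => PN nodes Wbar t + LN nodes (FVp d τ s C what) t with hudef
    have hu_what : ∀ x ∈ Set.Icc (0:ℝ) h, u x = what x := by
      intro x hx
      have hx' := hwhat x hx
      rw [hudef]
      dsimp only
      rw [← hx']
      abel
    have hFVu : ∀ i, FVp d τ s C u (nodes i) = FVp d τ s C what (nodes i) :=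
      fun i => FVp_congr hu_what (hmem i)
    have hLNu : ∀ x, LN nodes (FVp d τ s C u) x = LN nodes (FVp d τ s C what) x := by
      intro x
      simp only [LN]
      exact Finset.sum_congr rfl fun i _ => by rw [hFVu i]
    have hu_solves : ∀ t, u t - LN nodes (FVp d τ s C u) t = PN nodes Wbar t := by
      intro t
      rw [hLNu t, hudef]
      dsimp only
      abel
    have hPW_solves : ∀ t,
        PN nodes What t - LN nodes (FVp d τ s C (PN nodes What)) t = PN nodes Wbar t := by
      intro t
      rw [keyid What t,
        show (fun i => What i - FVp d τ s C (PN nodes What) (nodes i)) = Wbar from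
          funext hWhat]
    have hcont_u : Continuous u := by
      rw [hudef]
      exact (PN_continuous nodes Wbar).add (LN_continuous nodes _)
    have heq : ∀ t ∈ Set.Icc (0:ℝ) h, u t = PN nodes What t :=
      uniq _ u (fun t => PN nodes What t) hcont_u (PN_continuous nodes What)
        (memLp_of_continuous (PN_continuous nodes Wbar)) hu_solves hPW_solves
    constructor
    · intro i
      calc What i = PN nodes What (nodes i) := (PN_node hinj What i).symm
        _ = u (nodes i) := (heq _ (hmem i)).symm
        _ = what (nodes i) := hu_what _ (hmem i)
    · intro t ht
      calc what t = u t := (hu_what t ht).symm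
        _ = PN nodes What t := heq t ht
end
end
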